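/- arXiv:0704.0081 — 6 statements merged into one kernel-verified Lean document; each statement's English description precedes it below -/
import Mathlib

section
/- Let g be a Lie algebra and let x_0, y_0, x_1, ..., x_n, y_1, ..., y_n be elements of g satisfying: [x_0, y_0] = y_0; [x_0, x_i] = (1 - t_i) x_i; [x_0, y_i] = t_i y_i; [x_i, y_j] = δ_{ij} y_0; [x_i, x_j] = [y_i, y_j] = 0; [y_0, x_j] = [y_0, y_j] = 0 for all i, j in {1,...,n} and scalars t_i. Then the two-tensor r = ξ (x_0 ⊗ y_0 - y_0 ⊗ x_0 + Σ_{i=1}^n (x_i ⊗ y_i - y_i ⊗ x_i)) satisfies the homogeneous classical Yang–Baxter equation [r^{12}, r^{13}] + [r^{12}, r^{23}] + [r^{13}, r^{23}] = 0. -/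
open TensorProduct

section Aux
variable {k : Type*} [Field k] {g : Type*} [LieRing g] [LieAlgebra k g]

local notation "UU" => UniversalEnvelopingAlgebra k g

noncomputable def ee (v : g) : UU := UniversalEnvelopingAlgebra.ι k v

lemma ee_zero : ee (k := k) (0 : g) = 0 := by simp [ee]
lemma ee_neg (v : g) : ee (k := k) (-v) = - ee v := by simp [ee]
lemma ee_smul (c : k) (v : g) : ee (k := k) (c • v) = c • ee v := by simp [ee]

lemma ee_lie (u v : g) : ee (k := k) ⁅u, v⁆ = ee u * ee v - ee v * ee u := by
  simp [ee, Ring.lie_def]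

noncomputable def Pt (u v : g) : UU ⊗[k] (UU ⊗[k] UU) := ee u ⊗ₜ[k] (ee v ⊗ₜ[k] 1)
noncomputable def Qt (u v : g) : UU ⊗[k] (UU ⊗[k] UU) := ee u ⊗ₜ[k] ((1:UU) ⊗ₜ[k] ee v)
noncomputable def Rt (u v : g) : UU ⊗[k] (UU ⊗[k] UU) := (1:UU) ⊗ₜ[k] (ee u ⊗ₜ[k] ee v)

lemma commPQ (p q u v : g) :
    Pt (k := k) p q * Qt u v - Qt u v * Pt p q = ee ⁅p,u⁆ ⊗ₜ[k] (ee q ⊗ₜ[k] ee v) := by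
  simp [Pt, Qt, Algebra.TensorProduct.tmul_mul_tmul, ee_lie, sub_tmul, tmul_sub]

lemma commPR (p q u v : g) :
    Pt (k := k) p q * Rt u v - Rt u v * Pt p q = ee p ⊗ₜ[k] (ee ⁅q,u⁆ ⊗ₜ[k] ee v) := by
  simp [Pt, Rt, Algebra.TensorProduct.tmul_mul_tmul, ee_lie, sub_tmul, tmul_sub]

lemma commQR (p q u v : g) :
    Qt (k := k) p q * Rt u v - Rt u v * Qt p q = ee p ⊗ₜ[k] (ee u ⊗ₜ[k] ee ⁅q,v⁆) := by
  simp [Qt, Rt, Algebra.TensorProduct.tmul_mul_tmul, ee_lie, sub_tmul, tmul_sub]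

noncomputable def Pw (u v : g) : UU ⊗[k] (UU ⊗[k] UU) := Pt u v - Pt v u
noncomputable def Qw (u v : g) : UU ⊗[k] (UU ⊗[k] UU) := Qt u v - Qt v u
noncomputable def Rw (u v : g) : UU ⊗[k] (UU ⊗[k] UU) := Rt u v - Rt v u

lemma expand4 {T : Type*} [Ring T] (A B C D : T) :
    (A - B) * (C - D) - (C - D) * (A - B)
      = (A*C - C*A) - (A*D - D*A) - (B*C - C*B) + (B*D - D*B) := by
  simp only [mul_sub, sub_mul]
  abel

set_option maxHeartbeats 1600000 in
/-- the full per-pair CYBE contribution -/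
noncomputable def CV (p q u v : g) : UU ⊗[k] (UU ⊗[k] UU) :=
  (ee ⁅p,u⁆ ⊗ₜ[k] (ee q ⊗ₜ[k] ee v) - ee ⁅p,v⁆ ⊗ₜ[k] (ee q ⊗ₜ[k] ee u)
    - ee ⁅q,u⁆ ⊗ₜ[k] (ee p ⊗ₜ[k] ee v) + ee ⁅q,v⁆ ⊗ₜ[k] (ee p ⊗ₜ[k] ee u))
  + (ee p ⊗ₜ[k] (ee ⁅q,u⁆ ⊗ₜ[k] ee v) - ee p ⊗ₜ[k] (ee ⁅q,v⁆ ⊗ₜ[k] ee u)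
    - ee q ⊗ₜ[k] (ee ⁅p,u⁆ ⊗ₜ[k] ee v) + ee q ⊗ₜ[k] (ee ⁅p,v⁆ ⊗ₜ[k] ee u))
  + (ee p ⊗ₜ[k] (ee u ⊗ₜ[k] ee ⁅q,v⁆) - ee p ⊗ₜ[k] (ee v ⊗ₜ[k] ee ⁅q,u⁆)
    - ee q ⊗ₜ[k] (ee u ⊗ₜ[k] ee ⁅p,v⁆) + ee q ⊗ₜ[k] (ee v ⊗ₜ[k] ee ⁅p,u⁆))

set_option maxHeartbeats 1600000 in
lemma comm_total (p q u v : g) :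
    (Pw (k := k) p q * Qw u v - Qw u v * Pw p q)
      + (Pw p q * Rw u v - Rw u v * Pw p q)
      + (Qw p q * Rw u v - Rw u v * Qw p q) = CV p q u v := by
  simp only [Pw, Qw, Rw]
  rw [expand4, expand4, expand4]
  simp only [commPQ, commPR, commQR]
  rw [CV]


set_option maxHeartbeats 1600000 in
lemma CV00 (e f : g) (hef : ⁅e, f⁆ = f) : CV (k := k) e f e f = 0 := by
  have hfe : ⁅f, e⁆ = -f := by rw [← lie_skew, hef]
  simp only [CV, hef, hfe, lie_self]
  simp only [ee_neg, ee_zero, zero_tmul, tmul_zero, neg_tmul, tmul_neg]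
  abel

set_option maxHeartbeats 1600000 in
lemma CVzero (p q u v : g) (h1 : ⁅p, u⁆ = 0) (h2 : ⁅p, v⁆ = 0)
    (h3 : ⁅q, u⁆ = 0) (h4 : ⁅q, v⁆ = 0) : CV (k := k) p q u v = 0 := by
  simp only [CV, h1, h2, h3, h4]
  simp only [ee_zero, zero_tmul, tmul_zero]
  abel

set_option maxHeartbeats 1600000 in
lemma Dlem (e f a b : g) (t : k) (hef : ⁅e, f⁆ = f) (hea : ⁅e, a⁆ = (1 - t) • a)
    (heb : ⁅e, b⁆ = t • b) (hab : ⁅a, b⁆ = f) (hfa : ⁅f, a⁆ = 0) (hfb : ⁅f, b⁆ = 0) :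
    CV (k := k) e f a b + CV a b e f + CV a b a b = 0 := by
  have hae : ⁅a, e⁆ = -((1 - t) • a) := by rw [← lie_skew, hea]
  have hbe : ⁅b, e⁆ = -(t • b) := by rw [← lie_skew, heb]
  have hba : ⁅b, a⁆ = -f := by rw [← lie_skew, hab]
  have haf : ⁅a, f⁆ = 0 := by rw [← lie_skew, hfa, neg_zero]
  have hbf : ⁅b, f⁆ = 0 := by rw [← lie_skew, hfb, neg_zero]
  simp only [CV, hef, hea, heb, hab, hfa, hfb, hae, hbe, hba, haf, hbf, lie_self]
  simp only [ee_neg, ee_zero, ee_smul, zero_tmul, tmul_zero, neg_tmul, tmul_neg,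
    ← smul_tmul', tmul_smul, smul_neg, neg_smul]
  module


lemma cybe_sum {T : Type*} [Ring T] [Algebra k T] {J : Type*} [Fintype J]
    (c : k) (F G H : J → T) :
    ((c • ∑ o, F o) * (c • ∑ o, G o) - (c • ∑ o, G o) * (c • ∑ o, F o))
      + ((c • ∑ o, F o) * (c • ∑ o, H o) - (c • ∑ o, H o) * (c • ∑ o, F o))
      + ((c • ∑ o, G o) * (c • ∑ o, H o) - (c • ∑ o, H o) * (c • ∑ o, G o))
    = (c * c) • ∑ o, ∑ o', ((F o * G o' - G o' * F o) + (F o * H o' - H o' * F o)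
        + (G o * H o' - H o' * G o)) := by
  have key : ∀ (A B : J → T), (∑ o, A o) * (∑ o, B o) - (∑ o, B o) * (∑ o, A o)
      = ∑ o, ∑ o', (A o * B o' - B o' * A o) := by
    intro A B
    rw [Finset.sum_mul_sum, Finset.sum_mul_sum,
      Finset.sum_comm (s := Finset.univ) (t := Finset.univ) (f := fun a b => B a * A b),
      ← Finset.sum_sub_distrib]
    exact Finset.sum_congr rfl fun o _ => (Finset.sum_sub_distrib _ _).symm
  simp only [smul_mul_assoc, mul_smul_comm, smul_smul]
  rw [← smul_sub, ← smul_sub, ← smul_sub, ← smul_add, ← smul_add]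
  rw [key F G, key F H, key G H]
  simp only [Finset.sum_add_distrib]

lemma total_vanish {n : ℕ} (t : Fin n → k) (x₀ y₀ : g) (x y : Fin n → g)
    (h00 : ⁅x₀, y₀⁆ = y₀)
    (h0x : ∀ i, ⁅x₀, x i⁆ = (1 - t i) • x i)
    (h0y : ∀ i, ⁅x₀, y i⁆ = t i • y i)
    (hxy : ∀ i j, ⁅x i, y j⁆ = if i = j then y₀ else 0)
    (hxx : ∀ i j, ⁅x i, x j⁆ = 0)
    (hyy : ∀ i j, ⁅y i, y j⁆ = 0)
    (hy0x : ∀ j, ⁅y₀, x j⁆ = 0)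
    (hy0y : ∀ j, ⁅y₀, y j⁆ = 0) :
    ∑ o : Option (Fin n), ∑ o' : Option (Fin n),
      CV (k := k) (o.elim x₀ x) (o.elim y₀ y) (o'.elim x₀ x) (o'.elim y₀ y) = 0 := by
  have hdiag : ∀ i, ∑ j, CV (k := k) (x i) (y i) (x j) (y j)
      = CV (x i) (y i) (x i) (y i) := by
    intro i
    refine Finset.sum_eq_single i (fun j _ hji => ?_) (fun h => absurd (Finset.mem_univ i) h)
    refine CVzero _ _ _ _ (hxx i j) ?_ ?_ (hyy i j)
    · rw [hxy, if_neg (Ne.symm hji)]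
    · rw [← lie_skew, hxy, if_neg hji, neg_zero]
  have hD : ∀ i, CV (k := k) x₀ y₀ (x i) (y i) + CV (x i) (y i) x₀ y₀
      + CV (x i) (y i) (x i) (y i) = 0 := fun i =>
    Dlem x₀ y₀ (x i) (y i) (t i) h00 (h0x i) (h0y i)
      (by rw [hxy, if_pos rfl]) (hy0x i) (hy0y i)
  simp only [Fintype.sum_option, Option.elim]
  simp only [hdiag]
  rw [CV00 x₀ y₀ h00, zero_add, ← Finset.sum_add_distrib]
  refine Finset.sum_eq_zero fun i _ => ?_
  rw [← add_assoc]
  exact hD i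

end Aux

set_option maxHeartbeats 1600000 in
/-- An r-matrix of Jordanian type
`r = ξ (x₀ ∧ y₀ + Σ_{i=1}^n x_i ∧ y_i)` (with `x ∧ y = x ⊗ y - y ⊗ x`) built from elements
satisfying the relations (2.8) of the paper satisfies the homogeneous classical
Yang–Baxter equation in `U(g)^{⊗3}`. -/
theorem jordanian_type_rmatrix_cybe {k : Type*} [Field k] {g : Type*} [LieRing g]
    [LieAlgebra k g] (n : ℕ) (ξ : k) (t : Fin n → k) (x₀ y₀ : g) (x y : Fin n → g)
    (h00 : ⁅x₀, y₀⁆ = y₀)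
    (h0x : ∀ i, ⁅x₀, x i⁆ = (1 - t i) • x i)
    (h0y : ∀ i, ⁅x₀, y i⁆ = t i • y i)
    (hxy : ∀ i j, ⁅x i, y j⁆ = if i = j then y₀ else 0)
    (hxx : ∀ i j, ⁅x i, x j⁆ = 0)
    (hyy : ∀ i j, ⁅y i, y j⁆ = 0)
    (hy0x : ∀ j, ⁅y₀, x j⁆ = 0)
    (hy0y : ∀ j, ⁅y₀, y j⁆ = 0) :
    let U := UniversalEnvelopingAlgebra k g
    let ι : g → U := fun v => UniversalEnvelopingAlgebra.ι k v
    let r12 : U ⊗[k] (U ⊗[k] U) := ξ •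
      (ι x₀ ⊗ₜ[k] (ι y₀ ⊗ₜ[k] 1) - ι y₀ ⊗ₜ[k] (ι x₀ ⊗ₜ[k] 1) +
        ∑ i, (ι (x i) ⊗ₜ[k] (ι (y i) ⊗ₜ[k] 1) - ι (y i) ⊗ₜ[k] (ι (x i) ⊗ₜ[k] 1)))
    let r13 : U ⊗[k] (U ⊗[k] U) := ξ •
      (ι x₀ ⊗ₜ[k] ((1 : U) ⊗ₜ[k] ι y₀) - ι y₀ ⊗ₜ[k] ((1 : U) ⊗ₜ[k] ι x₀) +
        ∑ i, (ι (x i) ⊗ₜ[k] ((1 : U) ⊗ₜ[k] ι (y i)) -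
          ι (y i) ⊗ₜ[k] ((1 : U) ⊗ₜ[k] ι (x i))))
    let r23 : U ⊗[k] (U ⊗[k] U) := ξ •
      ((1 : U) ⊗ₜ[k] (ι x₀ ⊗ₜ[k] ι y₀) - (1 : U) ⊗ₜ[k] (ι y₀ ⊗ₜ[k] ι x₀) +
        ∑ i, ((1 : U) ⊗ₜ[k] (ι (x i) ⊗ₜ[k] ι (y i)) -
          (1 : U) ⊗ₜ[k] (ι (y i) ⊗ₜ[k] ι (x i))))
    (r12 * r13 - r13 * r12) + (r12 * r23 - r23 * r12) + (r13 * r23 - r23 * r13) = 0 := by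
  intro U ι r12 r13 r23
  have e12 : r12 = ξ • ∑ o : Option (Fin n), Pw (k := k) (o.elim x₀ x) (o.elim y₀ y) := by
    rw [Fintype.sum_option]; rfl
  have e13 : r13 = ξ • ∑ o : Option (Fin n), Qw (k := k) (o.elim x₀ x) (o.elim y₀ y) := by
    rw [Fintype.sum_option]; rfl
  have e23 : r23 = ξ • ∑ o : Option (Fin n), Rw (k := k) (o.elim x₀ x) (o.elim y₀ y) := by
    rw [Fintype.sum_option]; rfl
  rw [e12, e13, e23,
    cybe_sum ξ (fun o : Option (Fin n) => Pw (k := k) (o.elim x₀ x) (o.elim y₀ y))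
      (fun o => Qw (k := k) (o.elim x₀ x) (o.elim y₀ y))
      (fun o => Rw (k := k) (o.elim x₀ x) (o.elim y₀ y))]
  simp only [comm_total]
  rw [total_vanish t x₀ y₀ x y h00 h0x h0y hxy hxx hyy hy0x hy0y, smul_zero]
end

section
/- In the complexified Lorentz algebra with generators H_1, E_{1±}, H_2, E_{2±} satisfying [H_k, E_{k±}] = ± E_{k±}, [E_{k+}, E_{k-}] = 2 H_k for k = 1, 2, and all brackets between index-1 and index-2 generators vanishing (so the algebra is sl(2) ⊕ sl(2)), the element r'_3 = 2(β + iα)(E_{1+} ⊗ E_{1-} - E_{1-} ⊗ E_{1+}) + 2(β - iα)(E_{2+} ⊗ E_{2-} - E_{2-} ⊗ E_{2+}) satisfies the modified classical Yang–Baxter equation: [r^{12}, r^{13}] + [r^{12}, r^{23}] + [r^{13}, r^{23}] is an invariant element of the triple tensor power (i.e., it is annihilated by the adjoint action of every element of the Lie algebra). -/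
open TensorProduct

namespace MCYBE
variable {g : Type*} [LieRing g] [LieAlgebra ℂ g]

noncomputable def io (x : g) : UniversalEnvelopingAlgebra ℂ g := UniversalEnvelopingAlgebra.ι ℂ x

local notation "U" => UniversalEnvelopingAlgebra ℂ g
local notation "A" => U ⊗[ℂ] (U ⊗[ℂ] U)

attribute [local instance] LieRing.ofAssociativeRing

lemma io_comm (x y : g) : io x * io y - io y * io x = io ⁅x,y⁆ := by
  rw [io, io, io, LieHom.map_lie, Ring.lie_def]

lemma io_smul (c : ℂ) (x : g) : io (c • x) = c • io x := by simp [io]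
lemma io_add (x y : g) : io (x + y) = io x + io y := by simp [io]
lemma io_zero : io (0 : g) = 0 := by simp [io]

noncomputable def T (x y z : g) : A := io x ⊗ₜ[ℂ] (io y ⊗ₜ[ℂ] io z)

lemma T_zero₁ (y z : g) : T (0:g) y z = 0 := by simp [T, io_zero]
lemma T_zero₂ (x z : g) : T x (0:g) z = 0 := by simp [T, io_zero]
lemma T_zero₃ (x y : g) : T x y (0:g) = 0 := by simp [T, io_zero]
lemma T_smul₁ (c : ℂ) (x y z : g) : T (c • x) y z = c • T x y z := by
  simp [T, io_smul, TensorProduct.smul_tmul']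
lemma T_smul₂ (c : ℂ) (x y z : g) : T x (c • y) z = c • T x y z := by
  rw [T, T]
  conv_lhs => rw [io_smul, ← TensorProduct.smul_tmul', TensorProduct.tmul_smul]
lemma T_smul₃ (c : ℂ) (x y z : g) : T x y (c • z) = c • T x y z := by
  simp [T, io_smul, TensorProduct.tmul_smul]
lemma io_neg (x : g) : io (-x) = - io x := by simp [io]
lemma T_neg₁ (x y z : g) : T (-x) y z = - T x y z := by
  simp [T, io_neg, TensorProduct.neg_tmul, TensorProduct.tmul_neg]
lemma T_neg₂ (x y z : g) : T x (-y) z = - T x y z := by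
  simp [T, io_neg, TensorProduct.neg_tmul, TensorProduct.tmul_neg]
lemma T_neg₃ (x y z : g) : T x y (-z) = - T x y z := by
  simp [T, io_neg, TensorProduct.neg_tmul, TensorProduct.tmul_neg]

noncomputable def W12 (a b : g) : A := io a ⊗ₜ[ℂ] (io b ⊗ₜ[ℂ] 1) - io b ⊗ₜ[ℂ] (io a ⊗ₜ[ℂ] 1)
noncomputable def W13 (a b : g) : A := io a ⊗ₜ[ℂ] ((1:U) ⊗ₜ[ℂ] io b) - io b ⊗ₜ[ℂ] ((1:U) ⊗ₜ[ℂ] io a)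
noncomputable def W23 (a b : g) : A := (1:U) ⊗ₜ[ℂ] (io a ⊗ₜ[ℂ] io b) - (1:U) ⊗ₜ[ℂ] (io b ⊗ₜ[ℂ] io a)

lemma c1213 (a b c d : g) :
    (io a ⊗ₜ[ℂ] (io b ⊗ₜ[ℂ] (1:U))) * (io c ⊗ₜ[ℂ] ((1:U) ⊗ₜ[ℂ] io d))
    - (io c ⊗ₜ[ℂ] ((1:U) ⊗ₜ[ℂ] io d)) * (io a ⊗ₜ[ℂ] (io b ⊗ₜ[ℂ] (1:U)))
    = T ⁅a,c⁆ b d := by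
  rw [T, ← io_comm]
  simp [Algebra.TensorProduct.tmul_mul_tmul, TensorProduct.sub_tmul]

lemma c1223 (a b c d : g) :
    (io a ⊗ₜ[ℂ] (io b ⊗ₜ[ℂ] (1:U))) * ((1:U) ⊗ₜ[ℂ] (io c ⊗ₜ[ℂ] io d))
    - ((1:U) ⊗ₜ[ℂ] (io c ⊗ₜ[ℂ] io d)) * (io a ⊗ₜ[ℂ] (io b ⊗ₜ[ℂ] (1:U)))
    = T a ⁅b,c⁆ d := by
  rw [T, ← io_comm]
  simp [Algebra.TensorProduct.tmul_mul_tmul, TensorProduct.sub_tmul,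
    TensorProduct.tmul_sub]

lemma c1323 (a b c d : g) :
    (io a ⊗ₜ[ℂ] ((1:U) ⊗ₜ[ℂ] io b)) * ((1:U) ⊗ₜ[ℂ] (io c ⊗ₜ[ℂ] io d))
    - ((1:U) ⊗ₜ[ℂ] (io c ⊗ₜ[ℂ] io d)) * (io a ⊗ₜ[ℂ] ((1:U) ⊗ₜ[ℂ] io b))
    = T a c ⁅b,d⁆ := by
  rw [T, ← io_comm]
  simp [Algebra.TensorProduct.tmul_mul_tmul, TensorProduct.sub_tmul,
    TensorProduct.tmul_sub]

lemma K1 (a b c d : g) :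
    W12 a b * W13 c d - W13 c d * W12 a b
    = T ⁅a,c⁆ b d - T ⁅a,d⁆ b c - T ⁅b,c⁆ a d + T ⁅b,d⁆ a c := by
  rw [← c1213 a b c d, ← c1213 a b d c, ← c1213 b a c d, ← c1213 b a d c, W12, W13]
  simp only [sub_mul, mul_sub]
  abel

lemma K2 (a b c d : g) :
    W12 a b * W23 c d - W23 c d * W12 a b
    = T a ⁅b,c⁆ d - T a ⁅b,d⁆ c - T b ⁅a,c⁆ d + T b ⁅a,d⁆ c := by
  rw [← c1223 a b c d, ← c1223 a b d c, ← c1223 b a c d, ← c1223 b a d c, W12, W23]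
  simp only [sub_mul, mul_sub]
  abel

lemma K3 (a b c d : g) :
    W13 a b * W23 c d - W23 c d * W13 a b
    = T a c ⁅b,d⁆ - T a d ⁅b,c⁆ - T b c ⁅a,d⁆ + T b d ⁅a,c⁆ := by
  rw [← c1323 a b c d, ← c1323 a b d c, ← c1323 b a c d, ← c1323 b a d c, W13, W23]
  simp only [sub_mul, mul_sub]
  abel

noncomputable def Dl (x : g) : A :=
  io x ⊗ₜ[ℂ] ((1:U) ⊗ₜ[ℂ] (1:U)) + (1:U) ⊗ₜ[ℂ] (io x ⊗ₜ[ℂ] (1:U))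
    + (1:U) ⊗ₜ[ℂ] ((1:U) ⊗ₜ[ℂ] io x)

lemma d1 (x u v w : g) :
    (io x ⊗ₜ[ℂ] ((1:U) ⊗ₜ[ℂ] (1:U))) * T u v w - T u v w * (io x ⊗ₜ[ℂ] ((1:U) ⊗ₜ[ℂ] (1:U)))
    = T ⁅x,u⁆ v w := by
  rw [T, T, ← io_comm]
  simp [Algebra.TensorProduct.tmul_mul_tmul, TensorProduct.sub_tmul]

lemma d2 (x u v w : g) :
    ((1:U) ⊗ₜ[ℂ] (io x ⊗ₜ[ℂ] (1:U))) * T u v w - T u v w * ((1:U) ⊗ₜ[ℂ] (io x ⊗ₜ[ℂ] (1:U)))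
    = T u ⁅x,v⁆ w := by
  rw [T, T, ← io_comm]
  simp [Algebra.TensorProduct.tmul_mul_tmul, TensorProduct.sub_tmul, TensorProduct.tmul_sub]

lemma d3 (x u v w : g) :
    ((1:U) ⊗ₜ[ℂ] ((1:U) ⊗ₜ[ℂ] io x)) * T u v w - T u v w * ((1:U) ⊗ₜ[ℂ] ((1:U) ⊗ₜ[ℂ] io x))
    = T u v ⁅x,w⁆ := by
  rw [T, T, ← io_comm]
  simp [Algebra.TensorProduct.tmul_mul_tmul, TensorProduct.sub_tmul, TensorProduct.tmul_sub]

lemma K0 (x u v w : g) :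
    Dl x * T u v w - T u v w * Dl x = T ⁅x,u⁆ v w + T u ⁅x,v⁆ w + T u v ⁅x,w⁆ := by
  rw [← d1 x u v w, ← d2 x u v w, ← d3 x u v w, Dl]
  simp only [add_mul, mul_add]
  abel

lemma Dl_lie (x y : g) : Dl ⁅x,y⁆ = Dl x * Dl y - Dl y * Dl x := by
  simp only [Dl, ← io_comm]
  simp only [add_mul, mul_add, Algebra.TensorProduct.tmul_mul_tmul, one_mul, mul_one,
    TensorProduct.sub_tmul, TensorProduct.tmul_sub]
  abel

lemma comm_bilin (a b : ℂ) (X Y Z W : A) :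
    (a•X + b•Y) * (a•Z + b•W) - (a•Z + b•W) * (a•X + b•Y)
    = (a*a) • (X*Z - Z*X) + (a*b) • ((X*W - W*X) + (Y*Z - Z*Y)) + (b*b) • (Y*W - W*Y) := by
  simp only [add_mul, mul_add, smul_mul_assoc, mul_smul_comm, smul_smul, smul_sub, smul_add,
    mul_comm b a]
  abel

end MCYBE

namespace MCYBE
variable {g : Type*} [LieRing g] [LieAlgebra ℂ g]
local notation "U" => UniversalEnvelopingAlgebra ℂ g
local notation "A" => U ⊗[ℂ] (U ⊗[ℂ] U)

noncomputable def Sd (h e f : g) : A :=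
  T h e f - T h f e - T e h f + T f h e + T e f h - T f e h

lemma schouten (a b : ℂ) (H₁ E₁p E₁m H₂ E₂p E₂m : g)
    (h3 : ⁅E₁p, E₁m⁆ = (2 : ℂ) • H₁) (h6 : ⁅E₂p, E₂m⁆ = (2 : ℂ) • H₂)
    (c6 : ⁅E₁p, E₂p⁆ = 0) (c7 : ⁅E₁p, E₂m⁆ = 0)
    (c8 : ⁅E₁m, E₂p⁆ = 0) (c9 : ⁅E₁m, E₂m⁆ = 0) :
    ((a • W12 E₁p E₁m + b • W12 E₂p E₂m) * (a • W13 E₁p E₁m + b • W13 E₂p E₂m)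
      - (a • W13 E₁p E₁m + b • W13 E₂p E₂m) * (a • W12 E₁p E₁m + b • W12 E₂p E₂m))
    + ((a • W12 E₁p E₁m + b • W12 E₂p E₂m) * (a • W23 E₁p E₁m + b • W23 E₂p E₂m)
      - (a • W23 E₁p E₁m + b • W23 E₂p E₂m) * (a • W12 E₁p E₁m + b • W12 E₂p E₂m))
    + ((a • W13 E₁p E₁m + b • W13 E₂p E₂m) * (a • W23 E₁p E₁m + b • W23 E₂p E₂m)
      - (a • W23 E₁p E₁m + b • W23 E₂p E₂m) * (a • W13 E₁p E₁m + b • W13 E₂p E₂m))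
    = (a*a) • ((2:ℂ) • Sd H₁ E₁p E₁m) + (b*b) • ((2:ℂ) • Sd H₂ E₂p E₂m) := by
  have c6' : ⁅E₂p, E₁p⁆ = 0 := by rw [← lie_skew, c6, neg_zero]
  have c7' : ⁅E₂m, E₁p⁆ = 0 := by rw [← lie_skew, c7, neg_zero]
  have c8' : ⁅E₂p, E₁m⁆ = 0 := by rw [← lie_skew, c8, neg_zero]
  have c9' : ⁅E₂m, E₁m⁆ = 0 := by rw [← lie_skew, c9, neg_zero]
  have h3' : ⁅E₁m, E₁p⁆ = -((2:ℂ) • H₁) := by rw [← lie_skew, h3]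
  have h6' : ⁅E₂m, E₂p⁆ = -((2:ℂ) • H₂) := by rw [← lie_skew, h6]
  rw [comm_bilin, comm_bilin, comm_bilin,
    K1 E₁p E₁m E₁p E₁m, K1 E₁p E₁m E₂p E₂m, K1 E₂p E₂m E₁p E₁m, K1 E₂p E₂m E₂p E₂m,
    K2 E₁p E₁m E₁p E₁m, K2 E₁p E₁m E₂p E₂m, K2 E₂p E₂m E₁p E₁m, K2 E₂p E₂m E₂p E₂m,
    K3 E₁p E₁m E₁p E₁m, K3 E₁p E₁m E₂p E₂m, K3 E₂p E₂m E₁p E₁m, K3 E₂p E₂m E₂p E₂m]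
  simp only [lie_self, c6, c7, c8, c9, c6', c7', c8', c9', h3, h6, h3', h6',
    T_zero₁, T_zero₂, T_zero₃, T_smul₁, T_smul₂, T_smul₃, T_neg₁, T_neg₂, T_neg₃,
    smul_neg, neg_neg, Sd]
  module

end MCYBE

namespace MCYBE
variable {g : Type*} [LieRing g] [LieAlgebra ℂ g]
local notation "U" => UniversalEnvelopingAlgebra ℂ g
local notation "A" => U ⊗[ℂ] (U ⊗[ℂ] U)

lemma brk_sub (X P Q : A) : X*(P-Q) - (P-Q)*X = (X*P - P*X) - (X*Q - Q*X) := by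
  simp only [mul_sub, sub_mul]; abel
lemma brk_add (X P Q : A) : X*(P+Q) - (P+Q)*X = (X*P - P*X) + (X*Q - Q*X) := by
  simp only [mul_add, add_mul]; abel

lemma inv_h (h e f : g) (he : ⁅h,e⁆ = e) (hf : ⁅h,f⁆ = -f) :
    Dl h * Sd h e f - Sd h e f * Dl h = 0 := by
  simp only [Sd, brk_sub, brk_add, K0, he, hf, lie_self, T_zero₁, T_zero₂, T_zero₃,
    T_neg₁, T_neg₂, T_neg₃]
  abel

lemma inv_e (h e f : g) (he : ⁅h,e⁆ = e) (hef : ⁅e,f⁆ = (2:ℂ) • h) :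
    Dl e * Sd h e f - Sd h e f * Dl e = 0 := by
  have heh : ⁅e,h⁆ = -e := by rw [← lie_skew, he]
  simp only [Sd, brk_sub, brk_add, K0, heh, hef, lie_self, T_zero₁, T_zero₂, T_zero₃,
    T_neg₁, T_neg₂, T_neg₃, T_smul₁, T_smul₂, T_smul₃]
  module

lemma inv_f (h e f : g) (hf : ⁅h,f⁆ = -f) (hef : ⁅e,f⁆ = (2:ℂ) • h) :
    Dl f * Sd h e f - Sd h e f * Dl f = 0 := by
  have hfh : ⁅f,h⁆ = f := by rw [← lie_skew, hf, neg_neg]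
  have hfe : ⁅f,e⁆ = -((2:ℂ) • h) := by rw [← lie_skew, hef]
  simp only [Sd, brk_sub, brk_add, K0, hfh, hfe, lie_self, T_zero₁, T_zero₂, T_zero₃,
    T_neg₁, T_neg₂, T_neg₃, T_smul₁, T_smul₂, T_smul₃]
  module

lemma inv_comm (x h e f : g) (hxh : ⁅x,h⁆ = 0) (hxe : ⁅x,e⁆ = 0) (hxf : ⁅x,f⁆ = 0) :
    Dl x * Sd h e f - Sd h e f * Dl x = 0 := by
  simp only [Sd, brk_sub, brk_add, K0, hxh, hxe, hxf, T_zero₁, T_zero₂, T_zero₃]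
  abel

lemma brk_smul (X P : A) (c : ℂ) (h : X*P - P*X = 0) : X*(c•P) - (c•P)*X = 0 := by
  rw [mul_smul_comm, smul_mul_assoc]
  calc c • (X*P) - c • (P*X) = c • (X*P - P*X) := by rw [smul_sub]
    _ = 0 := by rw [h, smul_zero]

lemma brk_comb (X P Q : A) (h1 : X*P - P*X = 0) (h2 : X*Q - Q*X = 0) :
    X*(P+Q) - (P+Q)*X = 0 := by rw [brk_add, h1, h2, add_zero]

lemma Dl_add (x y : g) : Dl (x+y) = Dl x + Dl y := by
  simp only [Dl, io_add, TensorProduct.add_tmul, TensorProduct.tmul_add]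
  abel

lemma Dl_smul (c : ℂ) (x : g) : Dl (c • x) = c • Dl x := by
  simp only [Dl, io_smul, ← TensorProduct.smul_tmul', TensorProduct.tmul_smul, smul_add]

lemma Dl_zero : Dl (0 : g) = 0 := by
  simp [Dl, io_zero, TensorProduct.zero_tmul, TensorProduct.tmul_zero]

end MCYBE

namespace MCYBE
variable {g : Type*} [LieRing g] [LieAlgebra ℂ g]
local notation "U" => UniversalEnvelopingAlgebra ℂ g
local notation "A" => U ⊗[ℂ] (U ⊗[ℂ] U)

lemma comm_add_left (X Y P : A) (h1 : X*P - P*X = 0) (h2 : Y*P - P*Y = 0) :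
    (X+Y)*P - P*(X+Y) = 0 := by
  rw [add_mul, mul_add, sub_eq_zero.mp h1, sub_eq_zero.mp h2, sub_self]

lemma comm_smul_left (c : ℂ) (X P : A) (h : X*P - P*X = 0) :
    (c•X)*P - P*(c•X) = 0 := by
  rw [smul_mul_assoc, mul_smul_comm]
  calc c • (X*P) - c • (P*X) = c • (X*P - P*X) := by rw [smul_sub]
    _ = 0 := by rw [h, smul_zero]

lemma comm_lie_left (X Y P : A) (h1 : X*P - P*X = 0) (h2 : Y*P - P*Y = 0) :
    (X*Y - Y*X)*P - P*(X*Y - Y*X) = 0 := by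
  have e1 := sub_eq_zero.mp h1
  have e2 := sub_eq_zero.mp h2
  have h3 : (X*Y)*P = P*(X*Y) := by rw [mul_assoc, e2, ← mul_assoc, e1, mul_assoc]
  have h4 : (Y*X)*P = P*(Y*X) := by rw [mul_assoc, e1, ← mul_assoc, e2, mul_assoc]
  rw [sub_mul, mul_sub, h3, h4, sub_self]

end MCYBE

open MCYBE

/-- In the complexified Lorentz algebra `sl(2) ⊕ sl(2)` with generators
`H₁, E₁±, H₂, E₂±`, the element
`r'₃ = 2(β+iα) E₁₊ ∧ E₁₋ + 2(β-iα) E₂₊ ∧ E₂₋` satisfies the modified classical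
Yang–Baxter equation: the Schouten expression `[r¹²,r¹³] + [r¹²,r²³] + [r¹³,r²³]` is
invariant, i.e. it commutes with `Δ⁽²⁾(x) = x⊗1⊗1 + 1⊗x⊗1 + 1⊗1⊗x` for every element `x`
of the Lie algebra generated by `H₁, E₁±, H₂, E₂±`. -/
theorem lorentz_r3prime_mcybe {g : Type*} [LieRing g] [LieAlgebra ℂ g]
    (α β : ℂ) (H₁ E₁p E₁m H₂ E₂p E₂m : g)
    (h1 : ⁅H₁, E₁p⁆ = E₁p) (h2 : ⁅H₁, E₁m⁆ = -E₁m) (h3 : ⁅E₁p, E₁m⁆ = (2 : ℂ) • H₁)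
    (h4 : ⁅H₂, E₂p⁆ = E₂p) (h5 : ⁅H₂, E₂m⁆ = -E₂m) (h6 : ⁅E₂p, E₂m⁆ = (2 : ℂ) • H₂)
    (c1 : ⁅H₁, H₂⁆ = 0) (c2 : ⁅H₁, E₂p⁆ = 0) (c3 : ⁅H₁, E₂m⁆ = 0)
    (c4 : ⁅E₁p, H₂⁆ = 0) (c5 : ⁅E₁m, H₂⁆ = 0)
    (c6 : ⁅E₁p, E₂p⁆ = 0) (c7 : ⁅E₁p, E₂m⁆ = 0)
    (c8 : ⁅E₁m, E₂p⁆ = 0) (c9 : ⁅E₁m, E₂m⁆ = 0) :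
    let U := UniversalEnvelopingAlgebra ℂ g
    let ι : g → U := fun v => UniversalEnvelopingAlgebra.ι ℂ v
    let w12 : g → g → U ⊗[ℂ] (U ⊗[ℂ] U) := fun a b =>
      ι a ⊗ₜ[ℂ] (ι b ⊗ₜ[ℂ] 1) - ι b ⊗ₜ[ℂ] (ι a ⊗ₜ[ℂ] 1)
    let w13 : g → g → U ⊗[ℂ] (U ⊗[ℂ] U) := fun a b =>
      ι a ⊗ₜ[ℂ] ((1 : U) ⊗ₜ[ℂ] ι b) - ι b ⊗ₜ[ℂ] ((1 : U) ⊗ₜ[ℂ] ι a)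
    let w23 : g → g → U ⊗[ℂ] (U ⊗[ℂ] U) := fun a b =>
      (1 : U) ⊗ₜ[ℂ] (ι a ⊗ₜ[ℂ] ι b) - (1 : U) ⊗ₜ[ℂ] (ι b ⊗ₜ[ℂ] ι a)
    let r12 := (2 * (β + Complex.I * α)) • w12 E₁p E₁m +
      (2 * (β - Complex.I * α)) • w12 E₂p E₂m
    let r13 := (2 * (β + Complex.I * α)) • w13 E₁p E₁m +
      (2 * (β - Complex.I * α)) • w13 E₂p E₂m
    let r23 := (2 * (β + Complex.I * α)) • w23 E₁p E₁m +
      (2 * (β - Complex.I * α)) • w23 E₂p E₂m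
    let C := (r12 * r13 - r13 * r12) + (r12 * r23 - r23 * r12) + (r13 * r23 - r23 * r13)
    ∀ x ∈ LieSubalgebra.lieSpan ℂ g ({H₁, E₁p, E₁m, H₂, E₂p, E₂m} : Set g),
      (ι x ⊗ₜ[ℂ] ((1 : U) ⊗ₜ[ℂ] (1 : U)) + (1 : U) ⊗ₜ[ℂ] (ι x ⊗ₜ[ℂ] (1 : U)) +
          (1 : U) ⊗ₜ[ℂ] ((1 : U) ⊗ₜ[ℂ] ι x)) * C -
        C * (ι x ⊗ₜ[ℂ] ((1 : U) ⊗ₜ[ℂ] (1 : U)) + (1 : U) ⊗ₜ[ℂ] (ι x ⊗ₜ[ℂ] (1 : U)) +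
          (1 : U) ⊗ₜ[ℂ] ((1 : U) ⊗ₜ[ℂ] ι x)) = 0 := by
  intro U ι w12 w13 w23 r12 r13 r23 C
  have hC : C = ((2 * (β + Complex.I * α)) * (2 * (β + Complex.I * α))) •
        ((2:ℂ) • Sd H₁ E₁p E₁m)
      + ((2 * (β - Complex.I * α)) * (2 * (β - Complex.I * α))) •
        ((2:ℂ) • Sd H₂ E₂p E₂m) :=
    MCYBE.schouten _ _ H₁ E₁p E₁m H₂ E₂p E₂m h3 h6 c6 c7 c8 c9
  have key : ∀ y : g, y ∈ LieSubalgebra.lieSpan ℂ g ({H₁, E₁p, E₁m, H₂, E₂p, E₂m} : Set g) →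
      Dl y * C - C * Dl y = 0 := by
    let K : LieSubalgebra ℂ g :=
      { carrier := {z : g | Dl z * C - C * Dl z = 0}
        add_mem' := fun {p q} hp hq => by
          show Dl (p + q) * C - C * Dl (p + q) = 0
          rw [Dl_add]; exact comm_add_left _ _ _ hp hq
        zero_mem' := by show Dl (0:g) * C - C * Dl (0:g) = 0; rw [Dl_zero]; simp
        smul_mem' := fun c p hp => by
          show Dl (c • p) * C - C * Dl (c • p) = 0
          rw [Dl_smul]; exact comm_smul_left _ _ _ hp
        lie_mem' := fun {p q} hp hq => by
          show Dl ⁅p, q⁆ * C - C * Dl ⁅p, q⁆ = 0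
          rw [Dl_lie]; exact comm_lie_left _ _ _ hp hq }
    have hsub : ({H₁, E₁p, E₁m, H₂, E₂p, E₂m} : Set g) ⊆ K := by
      intro z hz
      have hmem : ∀ w : g, (Dl w * Sd H₁ E₁p E₁m - Sd H₁ E₁p E₁m * Dl w = 0) →
          (Dl w * Sd H₂ E₂p E₂m - Sd H₂ E₂p E₂m * Dl w = 0) → z = w → z ∈ K := by
        intro w i1 i2 hzw
        show Dl z * C - C * Dl z = 0
        subst hzw
        rw [hC]
        exact brk_comb _ _ _ (brk_smul _ _ _ (brk_smul _ _ _ i1))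
          (brk_smul _ _ _ (brk_smul _ _ _ i2))
      simp only [Set.mem_insert_iff, Set.mem_singleton_iff] at hz
      rcases hz with h | h | h | h | h | h
      · exact hmem H₁ (inv_h _ _ _ h1 h2)
          (inv_comm _ _ _ _ c1 c2 c3) h
      · exact hmem E₁p (inv_e _ _ _ h1 h3)
          (inv_comm _ _ _ _ c4 c6 c7) h
      · exact hmem E₁m (inv_f _ _ _ h2 h3)
          (inv_comm _ _ _ _ c5 c8 c9) h
      · refine hmem H₂ (inv_comm _ _ _ _ ?_ ?_ ?_) (inv_h _ _ _ h4 h5) h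
        · rw [← lie_skew, c1, neg_zero]
        · rw [← lie_skew, c4, neg_zero]
        · rw [← lie_skew, c5, neg_zero]
      · refine hmem E₂p (inv_comm _ _ _ _ ?_ ?_ ?_) (inv_e _ _ _ h4 h6) h
        · rw [← lie_skew, c2, neg_zero]
        · rw [← lie_skew, c6, neg_zero]
        · rw [← lie_skew, c8, neg_zero]
      · refine hmem E₂m (inv_comm _ _ _ _ ?_ ?_ ?_) (inv_f _ _ _ h5 h6) h
        · rw [← lie_skew, c3, neg_zero]
        · rw [← lie_skew, c7, neg_zero]
        · rw [← lie_skew, c9, neg_zero]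
    intro y hy
    exact LieSubalgebra.lieSpan_le.mpr hsub hy
  intro x hx
  exact key x hx
end

section
/- In the Lorentz algebra o(3,1), the element r_2 = α(e_+ ∧ h - e'_+ ∧ h') + 2β e'_+ ∧ e_+, where x ∧ y := x ⊗ y - y ⊗ x, satisfies the homogeneous classical Yang–Baxter equation in U(o(3,1))^{⊗3}. -/
open TensorProduct

lemma ui_comm {g : Type*} [LieRing g] [LieAlgebra ℝ g] (x y : g) :
    (UniversalEnvelopingAlgebra.ι ℝ x : UniversalEnvelopingAlgebra ℝ g) *
      UniversalEnvelopingAlgebra.ι ℝ y =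
    UniversalEnvelopingAlgebra.ι ℝ y * UniversalEnvelopingAlgebra.ι ℝ x +
      UniversalEnvelopingAlgebra.ι ℝ ⁅x, y⁆ := by
  letI : LieRing (UniversalEnvelopingAlgebra ℝ g) := LieRing.ofAssociativeRing
  have := (UniversalEnvelopingAlgebra.ι ℝ (L := g)).map_lie x y
  rw [Ring.lie_def] at this
  rw [this]; abel

set_option maxHeartbeats 4000000 in
set_option synthInstance.maxHeartbeats 1000000 in
/-- In the Lorentz algebra `o(3,1)`, the classical r-matrix
`r₂ = α(e₊ ∧ h - e'₊ ∧ h') + 2β e'₊ ∧ e₊` (with `x ∧ y = x ⊗ y - y ⊗ x`) satisfies the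
homogeneous classical Yang–Baxter equation in `U(o(3,1))^{⊗3}`. -/
theorem lorentz_r2_cybe {g : Type*} [LieRing g] [LieAlgebra ℝ g]
    (α β : ℝ) (h h' ep em fp fm : g)
    (h1 : ⁅h, ep⁆ = ep) (h2 : ⁅h, em⁆ = -em) (h3 : ⁅ep, em⁆ = (2 : ℝ) • h)
    (h4 : ⁅h, fp⁆ = fp) (h5 : ⁅h, fm⁆ = -fm)
    (h6 : ⁅h', ep⁆ = fp) (h7 : ⁅h', em⁆ = -fm)
    (h8 : ⁅ep, fm⁆ = (2 : ℝ) • h') (h9 : ⁅em, fp⁆ = -((2 : ℝ) • h'))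
    (h10 : ⁅h', fp⁆ = -ep) (h11 : ⁅h', fm⁆ = em)
    (h12 : ⁅fp, fm⁆ = -((2 : ℝ) • h)) (h13 : ⁅h, h'⁆ = 0)
    (h14 : ⁅ep, fp⁆ = 0) (h15 : ⁅em, fm⁆ = 0) :
    let U := UniversalEnvelopingAlgebra ℝ g
    let ι : g → U := fun v => UniversalEnvelopingAlgebra.ι ℝ v
    -- wedge embeddings into the three legs of U ⊗ U ⊗ U
    let w12 : g → g → U ⊗[ℝ] (U ⊗[ℝ] U) := fun a b =>
      ι a ⊗ₜ[ℝ] (ι b ⊗ₜ[ℝ] 1) - ι b ⊗ₜ[ℝ] (ι a ⊗ₜ[ℝ] 1)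
    let w13 : g → g → U ⊗[ℝ] (U ⊗[ℝ] U) := fun a b =>
      ι a ⊗ₜ[ℝ] ((1 : U) ⊗ₜ[ℝ] ι b) - ι b ⊗ₜ[ℝ] ((1 : U) ⊗ₜ[ℝ] ι a)
    let w23 : g → g → U ⊗[ℝ] (U ⊗[ℝ] U) := fun a b =>
      (1 : U) ⊗ₜ[ℝ] (ι a ⊗ₜ[ℝ] ι b) - (1 : U) ⊗ₜ[ℝ] (ι b ⊗ₜ[ℝ] ι a)
    let r12 : U ⊗[ℝ] (U ⊗[ℝ] U) := α • (w12 ep h - w12 fp h') + (2 * β) • w12 fp ep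
    let r13 : U ⊗[ℝ] (U ⊗[ℝ] U) := α • (w13 ep h - w13 fp h') + (2 * β) • w13 fp ep
    let r23 : U ⊗[ℝ] (U ⊗[ℝ] U) := α • (w23 ep h - w23 fp h') + (2 * β) • w23 fp ep
    (r12 * r13 - r13 * r12) + (r12 * r23 - r23 * r12) + (r13 * r23 - r23 * r13) = 0 := by
  intro U ι w12 w13 w23 r12 r13 r23
  have key : ∀ x y : g, ι x * ι y = ι y * ι x + ι ⁅x, y⁆ := fun x y => ui_comm x y
  have mneg : ∀ x : g, ι (-x) = -ι x := fun x => by simp [ι]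
  have cEA : ι ep * ι h = ι h * ι ep - ι ep := by
    rw [key ep h, ← lie_skew, h1, mneg]; abel
  have cFA : ι fp * ι h = ι h * ι fp - ι fp := by
    rw [key fp h, ← lie_skew, h4, mneg]; abel
  have cEB : ι ep * ι h' = ι h' * ι ep - ι fp := by
    rw [key ep h', ← lie_skew, h6, mneg]; abel
  have cFB : ι fp * ι h' = ι h' * ι fp + ι ep := by
    rw [key fp h', ← lie_skew, h10]; simp [ι]
  have cFE : ι fp * ι ep = ι ep * ι fp := by
    rw [key fp ep, ← lie_skew, h14]; simp [ι]
  have cBA : ι h' * ι h = ι h * ι h' := by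
    rw [key h' h, ← lie_skew, h13]; simp [ι]
  simp only [r12, r13, r23, w12, w13, w23]
  simp only [smul_sub, sub_mul, mul_sub, add_mul, mul_add, smul_mul_assoc, mul_smul_comm,
    Algebra.TensorProduct.tmul_mul_tmul, mul_one, one_mul]
  simp only [cEA, cFA, cEB, cFB, cFE, cBA]
  simp only [tmul_add, tmul_sub, add_tmul, sub_tmul, smul_add, smul_sub]
  module
end

section
/- Let H be a Hopf algebra and F ∈ H ⊗ H an invertible element satisfying the cocycle equation F^{12}(Δ ⊗ id)(F) = F^{23}(id ⊗ Δ)(F) and (ε ⊗ id)(F) = (id ⊗ ε)(F) = 1. Then the twisted coproduct Δ^{(F)}(a) = F Δ(a) F^{-1} is coassociative: (Δ^{(F)} ⊗ id) ∘ Δ^{(F)} = (id ⊗ Δ^{(F)}) ∘ Δ^{(F)}. -/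
set_option maxHeartbeats 1000000


open TensorProduct

section TwistAux

variable {R : Type*} [CommRing R] {H : Type*} [Ring H] [HopfAlgebra R H]

/-- `Δ ⊗ id` followed by the associator, as an algebra hom. -/
noncomputable def tD1 : H ⊗[R] H →ₐ[R] H ⊗[R] (H ⊗[R] H) :=
  (Algebra.TensorProduct.assoc R R R H H H).toAlgHom.comp
    (Algebra.TensorProduct.map (Bialgebra.comulAlgHom R H) (AlgHom.id R H))

/-- `id ⊗ Δ`, as an algebra hom. -/
noncomputable def tD2 : H ⊗[R] H →ₐ[R] H ⊗[R] (H ⊗[R] H) :=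
  Algebra.TensorProduct.map (AlgHom.id R H) (Bialgebra.comulAlgHom R H)

/-- `x ⊗ y ↦ x ⊗ y ⊗ 1`, as an algebra hom. -/
noncomputable def tI12 : H ⊗[R] H →ₐ[R] H ⊗[R] (H ⊗[R] H) :=
  Algebra.TensorProduct.map (AlgHom.id R H) Algebra.TensorProduct.includeLeft

/-- `x ⊗ y ↦ 1 ⊗ x ⊗ y`, as an algebra hom. -/
noncomputable def tI23 : H ⊗[R] H →ₐ[R] H ⊗[R] (H ⊗[R] H) :=
  Algebra.TensorProduct.includeRight

lemma tI12_eq (x : H ⊗[R] H) :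
    TensorProduct.map LinearMap.id ((TensorProduct.mk R H H).flip 1) x = tI12 x := by
  induction x using TensorProduct.induction_on with
  | zero => simp
  | tmul x y => simp [tI12]
  | add x y hx hy => simp [hx, hy]

lemma tI23_eq (x : H ⊗[R] H) :
    TensorProduct.mk R H (H ⊗[R] H) 1 x = tI23 x := rfl

lemma tD1_eq (x : H ⊗[R] H) :
    (TensorProduct.assoc R H H H).toLinearMap
      (TensorProduct.map (Coalgebra.comul (R := R) (A := H)) LinearMap.id x) = tD1 x := by
  induction x using TensorProduct.induction_on with
  | zero => simp
  | tmul x y => rfl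
  | add x y hx hy => simp only [map_add, hx, hy]

lemma tD2_eq (x : H ⊗[R] H) :
    TensorProduct.map LinearMap.id (Coalgebra.comul (R := R) (A := H)) x = tD2 x := by
  induction x using TensorProduct.induction_on with
  | zero => simp
  | tmul x y => simp [tD2]
  | add x y hx hy => simp [hx, hy]

lemma assoc_includeLeft (u : H ⊗[R] H) :
    Algebra.TensorProduct.assoc R R R H H H
      ((Algebra.TensorProduct.includeLeft : H ⊗[R] H →ₐ[R] (H ⊗[R] H) ⊗[R] H) u) = tI12 u := by
  induction u using TensorProduct.induction_on with
  | zero => simp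
  | tmul x y => rfl
  | add x y hx hy => simp only [map_add, hx, hy]

/-- Key computation for the left-hand side. -/
lemma map_twist_left (F Finv : H ⊗[R] H) (x : H ⊗[R] H) :
    (TensorProduct.assoc R H H H).toLinearMap
      (TensorProduct.map
        (LinearMap.mulRight R Finv ∘ₗ LinearMap.mulLeft R F ∘ₗ
          (Coalgebra.comul : H →ₗ[R] H ⊗[R] H)) LinearMap.id x) =
    tI12 F * tD1 x * tI12 Finv := by
  induction x using TensorProduct.induction_on with
  | zero => simp
  | tmul x y =>
      have key : (F * Coalgebra.comul x * Finv) ⊗ₜ[R] y =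
          ((Algebra.TensorProduct.includeLeft :
              H ⊗[R] H →ₐ[R] (H ⊗[R] H) ⊗[R] H) F) *
            ((Coalgebra.comul x : H ⊗[R] H) ⊗ₜ[R] y) *
            ((Algebra.TensorProduct.includeLeft :
              H ⊗[R] H →ₐ[R] (H ⊗[R] H) ⊗[R] H) Finv) := by
        simp [Algebra.TensorProduct.includeLeft_apply,
          Algebra.TensorProduct.tmul_mul_tmul]
      have hassoc : ∀ z : (H ⊗[R] H) ⊗[R] H,
          (TensorProduct.assoc R H H H).toLinearMap z
            = Algebra.TensorProduct.assoc R R R H H H z :=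
        fun z => rfl
      have htd1 : (Algebra.TensorProduct.assoc R R R H H H)
          ((Coalgebra.comul x : H ⊗[R] H) ⊗ₜ[R] y) = tD1 (x ⊗ₜ[R] y) := rfl
      simp only [TensorProduct.map_tmul, LinearMap.coe_comp, Function.comp_apply,
        LinearMap.mulLeft_apply, LinearMap.mulRight_apply, LinearMap.id_coe, id_eq]
      rw [key, hassoc, map_mul, map_mul, assoc_includeLeft, assoc_includeLeft, htd1]
  | add x y hx hy =>
      simp only [map_add, hx, hy, mul_add, add_mul]

/-- Key computation for the right-hand side. -/
lemma map_twist_right (F Finv : H ⊗[R] H) (x : H ⊗[R] H) :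
    TensorProduct.map LinearMap.id
      (LinearMap.mulRight R Finv ∘ₗ LinearMap.mulLeft R F ∘ₗ
        (Coalgebra.comul : H →ₗ[R] H ⊗[R] H)) x =
    tI23 F * tD2 x * tI23 Finv := by
  induction x using TensorProduct.induction_on with
  | zero => simp
  | tmul x y =>
      simp only [TensorProduct.map_tmul, LinearMap.coe_comp, Function.comp_apply,
        LinearMap.mulLeft_apply, LinearMap.mulRight_apply, LinearMap.id_coe, id_eq]
      have : x ⊗ₜ[R] (F * Coalgebra.comul y * Finv) =
          (1 ⊗ₜ[R] F) * (x ⊗ₜ[R] (Coalgebra.comul y : H ⊗[R] H)) * (1 ⊗ₜ[R] Finv) := by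
        simp [Algebra.TensorProduct.tmul_mul_tmul]
      rw [this]
      have htd2 : x ⊗ₜ[R] (Coalgebra.comul y : H ⊗[R] H) = tD2 (x ⊗ₜ[R] y) := rfl
      rw [htd2]
      rfl
  | add x y hx hy =>
      simp only [map_add, hx, hy, mul_add, add_mul]

end TwistAux

/-- If `F` is an invertible two-tensor satisfying the cocycle equation and
the counit normalization, then the twisted coproduct `Δ^{(F)}(a) = F Δ(a) F⁻¹` is
coassociative. -/
theorem twisted_coproduct_coassociative {R : Type*} [CommRing R] {H : Type*} [Ring H]
    [HopfAlgebra R H] (F Finv : H ⊗[R] H)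
    (hinv : F * Finv = 1 ∧ Finv * F = 1) :
    let e12 : H ⊗[R] H →ₗ[R] H ⊗[R] (H ⊗[R] H) :=
      TensorProduct.map LinearMap.id ((TensorProduct.mk R H H).flip 1)
    let e23 : H ⊗[R] H →ₗ[R] H ⊗[R] (H ⊗[R] H) := TensorProduct.mk R H (H ⊗[R] H) 1
    let Δ₀ : H →ₗ[R] H ⊗[R] H := Coalgebra.comul
    let E1 : H ⊗[R] H →ₗ[R] H :=
      (TensorProduct.lid R H).toLinearMap ∘ₗ
        TensorProduct.map (Coalgebra.counit (R := R) (A := H)) LinearMap.id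
    let E2 : H ⊗[R] H →ₗ[R] H :=
      (TensorProduct.rid R H).toLinearMap ∘ₗ
        TensorProduct.map LinearMap.id (Coalgebra.counit (R := R) (A := H))
    -- twisted coproduct Δ^{(F)}
    let ΔF : H →ₗ[R] H ⊗[R] H :=
      LinearMap.mulRight R Finv ∘ₗ LinearMap.mulLeft R F ∘ₗ Δ₀
    -- cocycle equation for F
    e12 F * ((TensorProduct.assoc R H H H).toLinearMap
        (TensorProduct.map Δ₀ LinearMap.id F)) =
      e23 F * TensorProduct.map LinearMap.id Δ₀ F →
    -- counit normalization for F
    (E1 F = 1 ∧ E2 F = 1) →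
    -- coassociativity of the twisted coproduct
    ∀ a : H,
      (TensorProduct.assoc R H H H).toLinearMap
          (TensorProduct.map ΔF LinearMap.id (ΔF a)) =
        TensorProduct.map LinearMap.id ΔF (ΔF a) := by
  intro e12 e23 Δ₀ E1 E2 ΔF hcoc _hcounit a
  obtain ⟨h1, h2⟩ := hinv
  -- translate the cocycle equation to the algebra-hom language
  have hcoc' : tI12 F * tD1 F = tI23 F * tD2 F := by
    have := hcoc
    simp only [e12, e23, Δ₀] at this
    rwa [tI12_eq, tI23_eq, tD1_eq, tD2_eq] at this
  -- coassociativity of the untwisted coproduct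
  have hmid : tD1 (Coalgebra.comul a : H ⊗[R] H) = tD2 (Coalgebra.comul a) := by
    rw [← tD1_eq, ← tD2_eq]
    exact Coalgebra.coassoc_apply a
  -- the two candidate inverses of Φ := tI12 F * tD1 F agree
  have hB : (tD1 Finv * tI12 Finv) * (tI12 F * tD1 F) = 1 := by
    rw [mul_assoc, ← mul_assoc (tI12 Finv), ← map_mul, h2, map_one, one_mul,
      ← map_mul, h2, map_one]
  have hC : (tI12 F * tD1 F) * (tD2 Finv * tI23 Finv) = 1 := by
    rw [hcoc', mul_assoc, ← mul_assoc (tD2 F), ← map_mul, h1, map_one, one_mul,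
      ← map_mul, h1, map_one]
  have hBC : tD1 Finv * tI12 Finv = tD2 Finv * tI23 Finv := by
    calc tD1 Finv * tI12 Finv
        = (tD1 Finv * tI12 Finv) * ((tI12 F * tD1 F) * (tD2 Finv * tI23 Finv)) := by
          rw [hC, mul_one]
      _ = ((tD1 Finv * tI12 Finv) * (tI12 F * tD1 F)) * (tD2 Finv * tI23 Finv) :=
          (mul_assoc _ _ _).symm
      _ = tD2 Finv * tI23 Finv := by rw [hB, one_mul]
  -- now compute both sides
  have hΔFa : ΔF a = F * Coalgebra.comul a * Finv := by
    simp [ΔF, Δ₀, mul_assoc]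
  calc (TensorProduct.assoc R H H H).toLinearMap
        (TensorProduct.map ΔF LinearMap.id (ΔF a))
      = tI12 F * tD1 (ΔF a) * tI12 Finv := map_twist_left F Finv (ΔF a)
    _ = (tI12 F * tD1 F) * tD1 (Coalgebra.comul a) * (tD1 Finv * tI12 Finv) := by
        rw [hΔFa, map_mul, map_mul]; simp only [mul_assoc]
    _ = (tI23 F * tD2 F) * tD2 (Coalgebra.comul a) * (tD2 Finv * tI23 Finv) := by
        rw [hcoc', hmid, hBC]
    _ = tI23 F * tD2 (ΔF a) * tI23 Finv := by
        rw [hΔFa, map_mul, map_mul]; simp only [mul_assoc]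
    _ = TensorProduct.map LinearMap.id ΔF (ΔF a) := (map_twist_right F Finv (ΔF a)).symm
end

section
/- Let g be a Lie algebra, r_1, r_2 ∈ g ⊗ g antisymmetric two-tensors each satisfying the homogeneous classical Yang–Baxter equation. Suppose r_2 is subordinated to r_1, i.e., [x ⊗ 1 + 1 ⊗ x, r_1] = 0 for every x in the support of r_2 (the Lie subalgebra generated by the tensor-factor elements of r_2), and additionally [x ⊗ 1 + 1 ⊗ x, r_2] = 0 for every x in the support of r_1. Then r = r_1 + r_2 also satisfies the homogeneous classical Yang–Baxter equation. -/
open TensorProduct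

variable {k : Type*} [Field k] {g : Type*} [LieRing g] [LieAlgebra k g]

attribute [local instance 100] LieRing.ofAssociativeRing

/-- The support of a two-tensor `r ∈ g ⊗ g`: the smallest Lie subalgebra `s ⊆ g` such that
`r` lies in the image of `s ⊗ s`.  It coincides with the Lie subalgebra generated by the
tensor factors of `r`. -/
noncomputable def rmatrixSupport (r : g ⊗[k] g) : LieSubalgebra k g :=
  sInf {s : LieSubalgebra k g |
    r ∈ LinearMap.range (TensorProduct.map s.incl.toLinearMap s.incl.toLinearMap)}

namespace CYBEaux

variable {k : Type*} [Field k]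

section contraction

variable {M N P Q : Type*} [AddCommGroup M] [AddCommGroup N] [AddCommGroup P] [AddCommGroup Q]
  [Module k M] [Module k N] [Module k P] [Module k Q]

/-- Contraction of the left factor by a functional. -/
noncomputable def cL (φ : M →ₗ[k] k) : M ⊗[k] N →ₗ[k] N :=
  (TensorProduct.lid k N).toLinearMap ∘ₗ LinearMap.rTensor N φ

/-- Contraction of the right factor by a functional. -/
noncomputable def cR (φ : N →ₗ[k] k) : M ⊗[k] N →ₗ[k] M :=
  (TensorProduct.rid k M).toLinearMap ∘ₗ LinearMap.lTensor M φ

@[simp] lemma cL_tmul (φ : M →ₗ[k] k) (x : M) (y : N) : cL φ (x ⊗ₜ[k] y) = φ x • y := by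
  simp [cL]

@[simp] lemma cR_tmul (φ : N →ₗ[k] k) (x : M) (y : N) : cR φ (x ⊗ₜ[k] y) = φ y • x := by
  simp [cR]

lemma cL_map (φ : P →ₗ[k] k) (f : M →ₗ[k] P) (h : N →ₗ[k] Q) (t : M ⊗[k] N) :
    cL φ (TensorProduct.map f h t) = h (cL (φ ∘ₗ f) t) := by
  induction t with
  | zero => simp
  | tmul x y => simp
  | add x y hx hy => simp [hx, hy]

lemma cR_map (φ : Q →ₗ[k] k) (f : M →ₗ[k] P) (h : N →ₗ[k] Q) (t : M ⊗[k] N) :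
    cR φ (TensorProduct.map f h t) = f (cR (φ ∘ₗ h) t) := by
  induction t with
  | zero => simp
  | tmul x y => simp
  | add x y hx hy => simp [hx, hy]

lemma cL_comm (φ : M →ₗ[k] k) (t : M ⊗[k] N) :
    cL φ t = cR φ (TensorProduct.comm k M N t) := by
  induction t with
  | zero => simp
  | tmul x y => simp
  | add x y hx hy => simp [hx, hy]

/-- If all right contractions of `r` lie in `W`, then `r ∈ W ⊗ N`. -/
lemma mem_range_right (W : Submodule k M) (r : M ⊗[k] N)
    (h : ∀ φ : N →ₗ[k] k, cR φ r ∈ W) :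
    r ∈ LinearMap.range (TensorProduct.map W.subtype (LinearMap.id : N →ₗ[k] N)) := by
  classical
  let b := Module.Basis.ofVectorSpace k N
  let e : M ⊗[k] N ≃ₗ[k] (Module.Basis.ofVectorSpaceIndex k N →₀ M) :=
    (TensorProduct.congr (LinearEquiv.refl k M) b.repr).trans
      (TensorProduct.finsuppScalarRight k k M _)
  have he : ∀ (t : M ⊗[k] N) (j), e t j = cR (b.coord j) t := by
    intro t j
    induction t with
    | zero => simp [e]
    | tmul x y => simp [e, Module.Basis.coord_apply]
    | add x y hx hy => simp only [map_add, Finsupp.add_apply, hx, hy]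
  have hsymm : ∀ (j) (m : M), e.symm (Finsupp.single j m) = m ⊗ₜ[k] b j := by
    intro j m
    apply e.injective
    rw [LinearEquiv.apply_symm_apply]
    ext i
    rw [he]
    by_cases hij : i = j
    · subst hij; simp [Module.Basis.coord_apply]
    · simp [Module.Basis.coord_apply, Finsupp.single_eq_of_ne (Ne.symm hij),
        Finsupp.single_apply, hij]
  set f := e r with hf
  have hr : r = (f.sum fun j m => m ⊗ₜ[k] b j) := by
    have h2 : e.symm (f.sum fun j m => Finsupp.single j m) = f.sum fun j m => m ⊗ₜ[k] b j := by
      rw [map_finsuppSum]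
      exact Finsupp.sum_congr fun j _ => hsymm j (f j)
    rw [Finsupp.sum_single] at h2
    rw [← h2, hf, e.symm_apply_apply]
  have hfW : ∀ j, f j ∈ W := fun j => by rw [hf, he]; exact h _
  refine ⟨∑ j ∈ f.support, (⟨f j, hfW j⟩ : W) ⊗ₜ[k] b j, ?_⟩
  rw [map_sum]
  simp only [TensorProduct.map_tmul, Submodule.coe_subtype, LinearMap.id_coe, id_eq]
  rw [hr, Finsupp.sum]

/-- If all left contractions of `r` lie in `W`, then `r ∈ M ⊗ W`. -/
lemma mem_range_left (W : Submodule k N) (r : M ⊗[k] N)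
    (h : ∀ φ : M →ₗ[k] k, cL φ r ∈ W) :
    r ∈ LinearMap.range (TensorProduct.map (LinearMap.id : M →ₗ[k] M) W.subtype) := by
  have h' : ∀ φ : M →ₗ[k] k, cR φ (TensorProduct.comm k M N r) ∈ W := by
    intro φ; rw [← cL_comm]; exact h φ
  obtain ⟨t, ht⟩ := mem_range_right W _ h'
  refine ⟨TensorProduct.comm k _ _ t, ?_⟩
  have : ∀ u : W ⊗[k] M, TensorProduct.map (LinearMap.id : M →ₗ[k] M) W.subtype
      (TensorProduct.comm k _ _ u) = (TensorProduct.comm k M N).symm (TensorProduct.map W.subtype (LinearMap.id : M →ₗ[k] M) u) := by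
    intro u
    induction u with
    | zero => simp
    | tmul x y => simp
    | add x y hx hy => simp [hx, hy]
  rw [this, ht, LinearEquiv.symm_apply_apply]

end contraction


variable {k : Type*} [Field k] {g : Type*} [LieRing g] [LieAlgebra k g]

lemma range_mono {s s' : LieSubalgebra k g} (h : s ≤ s') (r : g ⊗[k] g)
    (hr : r ∈ LinearMap.range (TensorProduct.map s.incl.toLinearMap s.incl.toLinearMap)) :
    r ∈ LinearMap.range (TensorProduct.map s'.incl.toLinearMap s'.incl.toLinearMap) := by
  obtain ⟨t, ht⟩ := hr
  refine ⟨TensorProduct.map (LieSubalgebra.inclusion h).toLinearMap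
    (LieSubalgebra.inclusion h).toLinearMap t, ?_⟩
  rw [← ht, ← LinearMap.comp_apply, ← TensorProduct.map_comp]
  rfl

lemma support_mem (r : g ⊗[k] g) :
    r ∈ LinearMap.range (TensorProduct.map (rmatrixSupport r).incl.toLinearMap
      (rmatrixSupport r).incl.toLinearMap) := by
  classical
  set X : Set g := (Set.range fun φ : g →ₗ[k] k => cL φ r) ∪
    (Set.range fun φ : g →ₗ[k] k => cR φ r) with hX
  set W : Submodule k g := Submodule.span k X with hW
  have hgenL : ∀ φ : g →ₗ[k] k, cL φ r ∈ W := fun φ =>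
    Submodule.subset_span (Or.inl ⟨φ, rfl⟩)
  have hgenR : ∀ φ : g →ₗ[k] k, cR φ r ∈ W := fun φ =>
    Submodule.subset_span (Or.inr ⟨φ, rfl⟩)
  obtain ⟨t, ht⟩ := mem_range_right W r hgenR
  have hB : ∀ φ : (↥W) →ₗ[k] k, cL φ t ∈ W := by
    intro φ
    obtain ⟨ψ, hψ⟩ := LinearMap.exists_extend φ
    have h1 : cL ψ r = cL φ t := by
      rw [← ht, cL_map, hψ]
      simp
    rw [← h1]; exact hgenL ψ
  obtain ⟨u, hu⟩ := mem_range_left W t hB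
  have hru : TensorProduct.map W.subtype W.subtype u = r := by
    rw [← ht, ← hu, ← LinearMap.comp_apply, ← TensorProduct.map_comp]
    simp
  -- the Lie subalgebra generated by W
  set s₀ : LieSubalgebra k g := LieSubalgebra.lieSpan k g ↑W with hs₀
  have hWs₀ : ∀ x ∈ W, x ∈ s₀ := fun x hx => LieSubalgebra.subset_lieSpan hx
  let j : ↥W →ₗ[k] ↥s₀ :=
    LinearMap.codRestrict s₀.toSubmodule W.subtype (fun c => hWs₀ _ c.2)
  have hs₀mem : r ∈ LinearMap.range
      (TensorProduct.map s₀.incl.toLinearMap s₀.incl.toLinearMap) := by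
    refine ⟨TensorProduct.map j j u, ?_⟩
    rw [← LinearMap.comp_apply, ← TensorProduct.map_comp]
    have : s₀.incl.toLinearMap ∘ₗ j = W.subtype := rfl
    rw [this, hru]
  have hle : s₀ ≤ rmatrixSupport r := by
    refine le_sInf fun s hs => ?_
    rw [LieSubalgebra.lieSpan_le]
    intro x hx
    have hWle : W ≤ s.toSubmodule := by
      rw [hW, Submodule.span_le]
      obtain ⟨v, hv⟩ := hs
      rintro y (⟨φ, rfl⟩ | ⟨φ, rfl⟩)
      · show cL φ r ∈ _
        rw [← hv, cL_map]
        exact (cL (φ ∘ₗ s.incl.toLinearMap) v).2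
      · show cR φ r ∈ _
        rw [← hv, cR_map]
        exact (cR (φ ∘ₗ s.incl.toLinearMap) v).2
    exact hWle hx
  exact range_mono hle r hs₀mem


variable {k : Type*} [CommRing k] {A : Type*} [Ring A] [Algebra k A]

noncomputable def E12 (k A : Type*) [CommRing k] [Ring A] [Algebra k A] :
    A ⊗[k] A →ₗ[k] A ⊗[k] (A ⊗[k] A) :=
  TensorProduct.map LinearMap.id ((TensorProduct.mk k A A).flip 1)

noncomputable def E13 (k A : Type*) [CommRing k] [Ring A] [Algebra k A] :
    A ⊗[k] A →ₗ[k] A ⊗[k] (A ⊗[k] A) :=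
  TensorProduct.map LinearMap.id (TensorProduct.mk k A A 1)

noncomputable def E23 (k A : Type*) [CommRing k] [Ring A] [Algebra k A] :
    A ⊗[k] A →ₗ[k] A ⊗[k] (A ⊗[k] A) :=
  TensorProduct.mk k A (A ⊗[k] A) 1

@[simp] lemma E12_tmul (x y : A) : E12 k A (x ⊗ₜ[k] y) = x ⊗ₜ[k] (y ⊗ₜ[k] (1 : A)) := rfl
@[simp] lemma E13_tmul (x y : A) : E13 k A (x ⊗ₜ[k] y) = x ⊗ₜ[k] ((1 : A) ⊗ₜ[k] y) := rfl
@[simp] lemma E23_apply (p : A ⊗[k] A) : E23 k A p = (1 : A) ⊗ₜ[k] p := rfl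

lemma E12_mul (P Q : A ⊗[k] A) : E12 k A (P * Q) = E12 k A P * E12 k A Q := by
  induction P with
  | zero => simp
  | add a b ha hb => simp [add_mul, ha, hb]
  | tmul x y =>
    induction Q with
    | zero => simp
    | add a b ha hb => simp [mul_add, ha, hb]
    | tmul x' y' => simp [Algebra.TensorProduct.tmul_mul_tmul]

lemma E13_mul (P Q : A ⊗[k] A) : E13 k A (P * Q) = E13 k A P * E13 k A Q := by
  induction P with
  | zero => simp
  | add a b ha hb => simp [add_mul, ha, hb]
  | tmul x y =>
    induction Q with
    | zero => simp
    | add a b ha hb => simp [mul_add, ha, hb]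
    | tmul x' y' => simp [Algebra.TensorProduct.tmul_mul_tmul]

lemma E23_mul (P Q : A ⊗[k] A) : E23 k A (P * Q) = E23 k A P * E23 k A Q := by
  simp [Algebra.TensorProduct.tmul_mul_tmul]

lemma comm12_3 (P : A ⊗[k] A) (w : A) :
    E12 k A P * ((1 : A) ⊗ₜ[k] ((1 : A) ⊗ₜ[k] w)) =
      ((1 : A) ⊗ₜ[k] ((1 : A) ⊗ₜ[k] w)) * E12 k A P := by
  induction P with
  | zero => simp
  | add a b ha hb => simp [add_mul, mul_add, ha, hb]
  | tmul x y => simp [Algebra.TensorProduct.tmul_mul_tmul]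

lemma comm13_2 (P : A ⊗[k] A) (w : A) :
    E13 k A P * ((1 : A) ⊗ₜ[k] (w ⊗ₜ[k] (1 : A))) =
      ((1 : A) ⊗ₜ[k] (w ⊗ₜ[k] (1 : A))) * E13 k A P := by
  induction P with
  | zero => simp
  | add a b ha hb => simp [add_mul, mul_add, ha, hb]
  | tmul x y => simp [Algebra.TensorProduct.tmul_mul_tmul]

lemma comm23_1 (Q : A ⊗[k] A) (w : A) :
    (w ⊗ₜ[k] ((1 : A) ⊗ₜ[k] (1 : A))) * E23 k A Q =
      E23 k A Q * (w ⊗ₜ[k] ((1 : A) ⊗ₜ[k] (1 : A))) := by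
  simp [Algebra.TensorProduct.tmul_mul_tmul, ← Algebra.TensorProduct.one_def]


section ring_lemmas
variable {R : Type*} [Ring R]

lemma mul_mul_comm_left {p y z : R} (hy : y*p = p*y) (hz : p*z = z*p) :
    p*(y*z) = (y*z)*p := by
  rw [← mul_assoc, ← hy, mul_assoc, hz, ← mul_assoc]

lemma mul_mul_comm_right {p y z : R} (hy : y*p = p*y) (hz : z*p = p*z) :
    (y*z)*p = p*(y*z) := by
  rw [mul_assoc, hz, ← mul_assoc, hy, mul_assoc]

lemma ring_key (a b c d e f : R)
    (h1 : a*c - c*a + (a*e - e*a) + (c*e - e*c) = 0)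
    (h2 : b*d - d*b + (b*f - f*b) + (d*f - f*d) = 0)
    (K1 : a*(d+f) = (d+f)*a)
    (K2 : (b - f)*c = c*(b - f))
    (K3 : (b+d)*e = e*(b+d)) :
    (a+b)*(c+d) - (c+d)*(a+b) + ((a+b)*(e+f) - (e+f)*(a+b)) +
      ((c+d)*(e+f) - (e+f)*(c+d)) = 0 := by
  have m1 : a*(d+f) - (d+f)*a = 0 := sub_eq_zero_of_eq K1
  have m2 : (b-f)*c - c*(b-f) = 0 := sub_eq_zero_of_eq K2
  have m3 : (b+d)*e - e*(b+d) = 0 := sub_eq_zero_of_eq K3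
  have expand : (a+b)*(c+d) - (c+d)*(a+b) + ((a+b)*(e+f) - (e+f)*(a+b)) +
      ((c+d)*(e+f) - (e+f)*(c+d))
      = (a*c - c*a + (a*e - e*a) + (c*e - e*c)) +
        (b*d - d*b + (b*f - f*b) + (d*f - f*d)) +
        (a*(d+f) - (d+f)*a) + ((b-f)*c - c*(b-f)) + ((b+d)*e - e*(b+d)) := by
    noncomm_ring
  rw [expand, h1, h2, m1, m2, m3]
  simp

end ring_lemmas

section comm_map
variable {k : Type*} [Field k]
variable {M N P Q : Type*} [AddCommGroup M] [AddCommGroup N] [AddCommGroup P] [AddCommGroup Q]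
  [Module k M] [Module k N] [Module k P] [Module k Q]

lemma comm_map (f : M →ₗ[k] P) (h : N →ₗ[k] Q) (t : M ⊗[k] N) :
    TensorProduct.comm k P Q (TensorProduct.map f h t) =
      TensorProduct.map h f (TensorProduct.comm k M N t) := by
  induction t with
  | zero => simp
  | tmul x y => simp
  | add x y hx hy => simp [hx, hy]

end comm_map

noncomputable def cybeExpr (k A : Type*) [CommRing k] [Ring A] [Algebra k A]
    (P : A ⊗[k] A) : A ⊗[k] (A ⊗[k] A) :=
  (E12 k A P * E13 k A P - E13 k A P * E12 k A P) +
    (E12 k A P * E23 k A P - E23 k A P * E12 k A P) +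
    (E13 k A P * E23 k A P - E23 k A P * E13 k A P)

lemma cybeExpr_apply {k A : Type*} [CommRing k] [Ring A] [Algebra k A] (P : A ⊗[k] A) :
    cybeExpr k A P =
      (E12 k A P * E13 k A P - E13 k A P * E12 k A P) +
        (E12 k A P * E23 k A P - E23 k A P * E12 k A P) +
        (E13 k A P * E23 k A P - E23 k A P * E13 k A P) := rfl

end CYBEaux

set_option maxHeartbeats 1000000 in
set_option synthInstance.maxHeartbeats 100000 in
/-- If antisymmetric classical r-matrices `r₁, r₂` each satisfy the
homogeneous CYBE, `r₂` is subordinated to `r₁` (`r₁` is invariant under the support of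
`r₂`), and moreover `r₂` is invariant under the support of `r₁`, then `r₁ + r₂` satisfies
the homogeneous CYBE. -/
theorem sum_of_subordinated_rmatrices_cybe (r₁ r₂ : g ⊗[k] g)
    (ha₁ : (TensorProduct.comm k g g) r₁ = -r₁)
    (ha₂ : (TensorProduct.comm k g g) r₂ = -r₂) :
    let U := UniversalEnvelopingAlgebra k g
    let ιl : g →ₗ[k] U := (UniversalEnvelopingAlgebra.ι k).toLinearMap
    -- embedding g ⊗ g → U(g) ⊗ U(g)
    let E : g ⊗[k] g →ₗ[k] U ⊗[k] U := TensorProduct.map ιl ιl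
    -- the three embeddings of U ⊗ U into U ⊗ U ⊗ U
    let e12 : U ⊗[k] U →ₗ[k] U ⊗[k] (U ⊗[k] U) :=
      TensorProduct.map LinearMap.id ((TensorProduct.mk k U U).flip 1)
    let e13 : U ⊗[k] U →ₗ[k] U ⊗[k] (U ⊗[k] U) :=
      TensorProduct.map LinearMap.id (TensorProduct.mk k U U 1)
    let e23 : U ⊗[k] U →ₗ[k] U ⊗[k] (U ⊗[k] U) := TensorProduct.mk k U (U ⊗[k] U) 1
    -- the CYBE expression
    let cybe : g ⊗[k] g → Prop := fun r =>
      (e12 (E r) * e13 (E r) - e13 (E r) * e12 (E r)) +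
        (e12 (E r) * e23 (E r) - e23 (E r) * e12 (E r)) +
        (e13 (E r) * e23 (E r) - e23 (E r) * e13 (E r)) = 0
    -- adjoint action x ↦ [x ⊗ 1 + 1 ⊗ x, ·] on U ⊗ U
    let D : g → U ⊗[k] U := fun x => ιl x ⊗ₜ[k] (1 : U) + (1 : U) ⊗ₜ[k] ιl x
    cybe r₁ → cybe r₂ →
      (∀ x ∈ rmatrixSupport r₂, D x * E r₁ - E r₁ * D x = 0) →
      (∀ x ∈ rmatrixSupport r₁, D x * E r₂ - E r₂ * D x = 0) →
      cybe (r₁ + r₂) := by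
  intro U ιl E e12 e13 e23 cybe D hc1 hc2 hinv1 _hinv2
  have hE : E = TensorProduct.map ιl ιl := rfl
  have hc1' : CYBEaux.cybeExpr k U (E r₁) = 0 := hc1
  have hc2' : CYBEaux.cybeExpr k U (E r₂) = 0 := hc2
  have hinv1' : ∀ x ∈ rmatrixSupport r₂, D x * E r₁ = E r₁ * D x :=
    fun x hx => sub_eq_zero.mp (hinv1 x hx)
  obtain ⟨t₂, ht₂⟩ := CYBEaux.support_mem (k := k) r₂
  -- Key lemma 1:  r₁^{12} commutes with r₂^{13} + r₂^{23}
  have K1 : ∀ t : (↥(rmatrixSupport r₂)) ⊗[k] (↥(rmatrixSupport r₂)),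
      CYBEaux.E12 k U (E r₁) *
        (CYBEaux.E13 k U (E (TensorProduct.map (rmatrixSupport r₂).incl.toLinearMap (rmatrixSupport r₂).incl.toLinearMap t)) +
          CYBEaux.E23 k U (E (TensorProduct.map (rmatrixSupport r₂).incl.toLinearMap (rmatrixSupport r₂).incl.toLinearMap t))) =
      (CYBEaux.E13 k U (E (TensorProduct.map (rmatrixSupport r₂).incl.toLinearMap (rmatrixSupport r₂).incl.toLinearMap t)) +
          CYBEaux.E23 k U (E (TensorProduct.map (rmatrixSupport r₂).incl.toLinearMap (rmatrixSupport r₂).incl.toLinearMap t))) *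
        CYBEaux.E12 k U (E r₁) := by
    intro t
    induction t with
    | zero => simp only [map_zero, add_zero, zero_add, zero_mul, mul_zero]
    | add x y hx hy =>
      simp only [map_add]
      rw [add_add_add_comm, mul_add, add_mul, hx, hy]
    | tmul a b =>
      have h1 : E (TensorProduct.map (rmatrixSupport r₂).incl.toLinearMap (rmatrixSupport r₂).incl.toLinearMap (a ⊗ₜ[k] b)) =
          ιl ↑a ⊗ₜ[k] ιl ↑b := by
        rw [hE]
        simp [TensorProduct.map_tmul, LieSubalgebra.coe_incl]
      rw [h1]
      have hfact : CYBEaux.E13 k U (ιl ↑a ⊗ₜ[k] ιl ↑b) + CYBEaux.E23 k U (ιl ↑a ⊗ₜ[k] ιl ↑b)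
          = CYBEaux.E12 k U (D ↑a) * ((1 : U) ⊗ₜ[k] ((1 : U) ⊗ₜ[k] ιl ↑b)) := by
        have hDa : CYBEaux.E12 k U (D ↑a) =
            ιl ↑a ⊗ₜ[k] ((1 : U) ⊗ₜ[k] (1 : U)) + (1 : U) ⊗ₜ[k] (ιl ↑a ⊗ₜ[k] (1 : U)) := by
          show CYBEaux.E12 k U (ιl ↑a ⊗ₜ[k] (1 : U) + (1 : U) ⊗ₜ[k] ιl ↑a) = _
          rw [map_add, CYBEaux.E12_tmul, CYBEaux.E12_tmul]
        rw [hDa, CYBEaux.E13_tmul, CYBEaux.E23_apply, add_mul]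
        simp [Algebra.TensorProduct.tmul_mul_tmul]
      rw [hfact]
      have hy := congrArg (CYBEaux.E12 k U) (hinv1' ↑a a.2)
      rw [CYBEaux.E12_mul, CYBEaux.E12_mul] at hy
      exact CYBEaux.mul_mul_comm_left (R := U ⊗[k] (U ⊗[k] U)) hy (CYBEaux.comm12_3 (E r₁) (ιl ↑b))
  -- Key lemma 2:  r₂^{12} - r₂^{23} commutes with r₁^{13}
  have K2 : ∀ t : (↥(rmatrixSupport r₂)) ⊗[k] (↥(rmatrixSupport r₂)),
      (CYBEaux.E12 k U (E (TensorProduct.map (rmatrixSupport r₂).incl.toLinearMap (rmatrixSupport r₂).incl.toLinearMap t)) +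
          CYBEaux.E23 k U (E (TensorProduct.map (rmatrixSupport r₂).incl.toLinearMap (rmatrixSupport r₂).incl.toLinearMap
            (TensorProduct.comm k _ _ t)))) * CYBEaux.E13 k U (E r₁) =
      CYBEaux.E13 k U (E r₁) *
        (CYBEaux.E12 k U (E (TensorProduct.map (rmatrixSupport r₂).incl.toLinearMap (rmatrixSupport r₂).incl.toLinearMap t)) +
          CYBEaux.E23 k U (E (TensorProduct.map (rmatrixSupport r₂).incl.toLinearMap (rmatrixSupport r₂).incl.toLinearMap
            (TensorProduct.comm k _ _ t)))) := by
    intro t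
    induction t with
    | zero => simp only [map_zero, add_zero, zero_add, zero_mul, mul_zero]
    | add x y hx hy =>
      simp only [map_add]
      rw [add_add_add_comm, mul_add, add_mul, hx, hy]
    | tmul a b =>
      rw [TensorProduct.comm_tmul]
      have h1 : E (TensorProduct.map (rmatrixSupport r₂).incl.toLinearMap (rmatrixSupport r₂).incl.toLinearMap (a ⊗ₜ[k] b)) =
          ιl ↑a ⊗ₜ[k] ιl ↑b := by
        rw [hE]
        simp [TensorProduct.map_tmul, LieSubalgebra.coe_incl]
      have h2 : E (TensorProduct.map (rmatrixSupport r₂).incl.toLinearMap (rmatrixSupport r₂).incl.toLinearMap (b ⊗ₜ[k] a)) =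
          ιl ↑b ⊗ₜ[k] ιl ↑a := by
        rw [hE]
        simp [TensorProduct.map_tmul, LieSubalgebra.coe_incl]
      rw [h1, h2]
      have hfact : CYBEaux.E12 k U (ιl ↑a ⊗ₜ[k] ιl ↑b) + CYBEaux.E23 k U (ιl ↑b ⊗ₜ[k] ιl ↑a)
          = CYBEaux.E13 k U (D ↑a) * ((1 : U) ⊗ₜ[k] (ιl ↑b ⊗ₜ[k] (1 : U))) := by
        have hDa : CYBEaux.E13 k U (D ↑a) =
            ιl ↑a ⊗ₜ[k] ((1 : U) ⊗ₜ[k] (1 : U)) + (1 : U) ⊗ₜ[k] ((1 : U) ⊗ₜ[k] ιl ↑a) := by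
          show CYBEaux.E13 k U (ιl ↑a ⊗ₜ[k] (1 : U) + (1 : U) ⊗ₜ[k] ιl ↑a) = _
          rw [map_add, CYBEaux.E13_tmul, CYBEaux.E13_tmul]
        rw [hDa, CYBEaux.E12_tmul, CYBEaux.E23_apply, add_mul]
        simp [Algebra.TensorProduct.tmul_mul_tmul]
      rw [hfact]
      have hy := congrArg (CYBEaux.E13 k U) (hinv1' ↑a a.2)
      rw [CYBEaux.E13_mul, CYBEaux.E13_mul] at hy
      exact CYBEaux.mul_mul_comm_right (R := U ⊗[k] (U ⊗[k] U)) hy (CYBEaux.comm13_2 (E r₁) (ιl ↑b)).symm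
  -- Key lemma 3:  r₂^{12} + r₂^{13} commutes with r₁^{23}
  have K3 : ∀ t : (↥(rmatrixSupport r₂)) ⊗[k] (↥(rmatrixSupport r₂)),
      (CYBEaux.E12 k U (E (TensorProduct.map (rmatrixSupport r₂).incl.toLinearMap (rmatrixSupport r₂).incl.toLinearMap t)) +
          CYBEaux.E13 k U (E (TensorProduct.map (rmatrixSupport r₂).incl.toLinearMap (rmatrixSupport r₂).incl.toLinearMap t))) *
        CYBEaux.E23 k U (E r₁) =
      CYBEaux.E23 k U (E r₁) *
        (CYBEaux.E12 k U (E (TensorProduct.map (rmatrixSupport r₂).incl.toLinearMap (rmatrixSupport r₂).incl.toLinearMap t)) +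
          CYBEaux.E13 k U (E (TensorProduct.map (rmatrixSupport r₂).incl.toLinearMap (rmatrixSupport r₂).incl.toLinearMap t))) := by
    intro t
    induction t with
    | zero => simp only [map_zero, add_zero, zero_add, zero_mul, mul_zero]
    | add x y hx hy =>
      simp only [map_add]
      rw [add_add_add_comm, mul_add, add_mul, hx, hy]
    | tmul a b =>
      have h1 : E (TensorProduct.map (rmatrixSupport r₂).incl.toLinearMap (rmatrixSupport r₂).incl.toLinearMap (a ⊗ₜ[k] b)) =
          ιl ↑a ⊗ₜ[k] ιl ↑b := by
        rw [hE]
        simp [TensorProduct.map_tmul, LieSubalgebra.coe_incl]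
      rw [h1]
      have hfact : CYBEaux.E12 k U (ιl ↑a ⊗ₜ[k] ιl ↑b) + CYBEaux.E13 k U (ιl ↑a ⊗ₜ[k] ιl ↑b)
          = (ιl ↑a ⊗ₜ[k] ((1 : U) ⊗ₜ[k] (1 : U))) * CYBEaux.E23 k U (D ↑b) := by
        have hDb : CYBEaux.E23 k U (D ↑b) =
            (1 : U) ⊗ₜ[k] (ιl ↑b ⊗ₜ[k] (1 : U)) + (1 : U) ⊗ₜ[k] ((1 : U) ⊗ₜ[k] ιl ↑b) := by
          show CYBEaux.E23 k U (ιl ↑b ⊗ₜ[k] (1 : U) + (1 : U) ⊗ₜ[k] ιl ↑b) = _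
          rw [map_add, CYBEaux.E23_apply, CYBEaux.E23_apply]
        rw [hDb, CYBEaux.E12_tmul, CYBEaux.E13_tmul, mul_add]
        simp [Algebra.TensorProduct.tmul_mul_tmul]
      rw [hfact]
      have hz := congrArg (CYBEaux.E23 k U) (hinv1' ↑b b.2)
      rw [CYBEaux.E23_mul, CYBEaux.E23_mul] at hz
      exact CYBEaux.mul_mul_comm_right (R := U ⊗[k] (U ⊗[k] U)) (CYBEaux.comm23_1 (E r₁) (ιl ↑a)) hz
  -- instantiate the key lemmas at a representation of r₂ over its support
  have ht₂' : TensorProduct.map (rmatrixSupport r₂).incl.toLinearMap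
      (rmatrixSupport r₂).incl.toLinearMap t₂ = r₂ := ht₂
  have K1' := K1 t₂
  have K2' := K2 t₂
  have K3' := K3 t₂
  rw [ht₂'] at K1' K3'
  rw [(CYBEaux.comm_map (rmatrixSupport r₂).incl.toLinearMap (rmatrixSupport r₂).incl.toLinearMap t₂).symm, ht₂', ha₂] at K2'
  simp only [map_neg] at K2'
  rw [← sub_eq_add_neg] at K2'
  -- assemble
  show CYBEaux.cybeExpr k U (E (r₁ + r₂)) = 0
  have hadd : E (r₁ + r₂) = E r₁ + E r₂ := map_add E r₁ r₂
  rw [CYBEaux.cybeExpr_apply (E (r₁ + r₂)), hadd]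
  simp only [map_add]
  exact CYBEaux.ring_key (R := U ⊗[k] (U ⊗[k] U)) _ _ _ _ _ _ hc1' hc2' K1' K2' K3'
end

section
/- Let H be a Hopf algebra over a field, F = Σ_i f_i^{(1)} ⊗ f_i^{(2)} an invertible twist satisfying the cocycle and counit conditions, and u = Σ_i f_i^{(1)} S(f_i^{(2)}) where S is the antipode of H. Then u is invertible and S^{(F)}(a) = u S(a) u^{-1} defines an antipode for the twisted Hopf algebra H^{(F)} with coproduct Δ^{(F)}(a) = F Δ(a) F^{-1}: i.e., m ∘ (S^{(F)} ⊗ id) ∘ Δ^{(F)} = η ∘ ε = m ∘ (id ⊗ S^{(F)}) ∘ Δ^{(F)}. -/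
open TensorProduct


namespace DrinfeldTwistAux

section Conv

variable {k : Type*} [Field k] {H : Type*} [Ring H] [Algebra k H]
variable {C : Type*} [AddCommGroup C] [Module k C]

/-- Convolution product of linear maps from a "coalgebra-like" module. -/
noncomputable def conv (Δc : C →ₗ[k] C ⊗[k] C) (f g : C →ₗ[k] H) : C →ₗ[k] H :=
  LinearMap.mul' k H ∘ₗ TensorProduct.map f g ∘ₗ Δc

lemma conv_apply (Δc : C →ₗ[k] C ⊗[k] C) (f g : C →ₗ[k] H) (w : C) :
    conv Δc f g w = LinearMap.mul' k H (TensorProduct.map f g (Δc w)) := rfl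


lemma map_comp_rid {D E F : Type*} [AddCommGroup D] [Module k D] [AddCommGroup E] [Module k E]
    [AddCommGroup F] [Module k F]
    (p : C →ₗ[k] D) (A : D →ₗ[k] E) (h : C →ₗ[k] F) :
    TensorProduct.map (A ∘ₗ p) h
      = TensorProduct.map A h ∘ₗ TensorProduct.map p (LinearMap.id : C →ₗ[k] C) := by
  exact TensorProduct.ext' fun _ _ => rfl

lemma map_comp_lid {D E F : Type*} [AddCommGroup D] [Module k D] [AddCommGroup E] [Module k E]
    [AddCommGroup F] [Module k F]
    (p : C →ₗ[k] D) (A : D →ₗ[k] E) (f : C →ₗ[k] F) :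
    TensorProduct.map f (A ∘ₗ p)
      = TensorProduct.map f A ∘ₗ TensorProduct.map (LinearMap.id : C →ₗ[k] C) p := by
  exact TensorProduct.ext' fun _ _ => rfl

lemma push_assoc (f g h : C →ₗ[k] H) :
    LinearMap.mul' k H ∘ₗ TensorProduct.map (LinearMap.mul' k H ∘ₗ TensorProduct.map f g) h
        ∘ₗ (TensorProduct.assoc k C C C).symm.toLinearMap
      = LinearMap.mul' k H ∘ₗ TensorProduct.map f (LinearMap.mul' k H ∘ₗ TensorProduct.map g h) := by
  ext x y z
  simp [LinearMap.mul'_apply, mul_assoc]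

lemma conv_assoc (Δc : C →ₗ[k] C ⊗[k] C)
    (hco : ∀ w : C, TensorProduct.map Δc LinearMap.id (Δc w)
      = (TensorProduct.assoc k C C C).symm (TensorProduct.map LinearMap.id Δc (Δc w)))
    (f g h : C →ₗ[k] H) :
    conv Δc (conv Δc f g) h = conv Δc f (conv Δc g h) := by
  apply LinearMap.ext; intro w
  have e1 : TensorProduct.map (conv Δc f g) h (Δc w)
      = TensorProduct.map (LinearMap.mul' k H ∘ₗ TensorProduct.map f g) h
          (TensorProduct.map Δc LinearMap.id (Δc w)) := by
    rw [show conv Δc f g = (LinearMap.mul' k H ∘ₗ TensorProduct.map f g) ∘ₗ Δc from rfl,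
      map_comp_rid, LinearMap.comp_apply]
  have e2 : TensorProduct.map f (conv Δc g h) (Δc w)
      = TensorProduct.map f (LinearMap.mul' k H ∘ₗ TensorProduct.map g h)
          (TensorProduct.map LinearMap.id Δc (Δc w)) := by
    rw [show conv Δc g h = (LinearMap.mul' k H ∘ₗ TensorProduct.map g h) ∘ₗ Δc from rfl,
      map_comp_lid, LinearMap.comp_apply]
  rw [conv_apply, conv_apply, e1, e2, hco w]
  exact LinearMap.congr_fun (push_assoc f g h) _

lemma conv_unit_left (Δc : C →ₗ[k] C ⊗[k] C) (εc : C →ₗ[k] k)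
    (hcu : ∀ w : C, TensorProduct.map εc LinearMap.id (Δc w) = (1 : k) ⊗ₜ[k] w)
    (f : C →ₗ[k] H) :
    conv Δc (Algebra.linearMap k H ∘ₗ εc) f = f := by
  apply LinearMap.ext; intro w
  have e1 : TensorProduct.map (Algebra.linearMap k H ∘ₗ εc) f (Δc w)
      = TensorProduct.map (Algebra.linearMap k H) f
          (TensorProduct.map εc LinearMap.id (Δc w)) := by
    rw [map_comp_rid, LinearMap.comp_apply]
  rw [conv_apply, e1, hcu w]
  simp [LinearMap.mul'_apply]

lemma conv_unit_right (Δc : C →ₗ[k] C ⊗[k] C) (εc : C →ₗ[k] k)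
    (hcu : ∀ w : C, TensorProduct.map LinearMap.id εc (Δc w) = w ⊗ₜ[k] (1 : k))
    (f : C →ₗ[k] H) :
    conv Δc f (Algebra.linearMap k H ∘ₗ εc) = f := by
  apply LinearMap.ext; intro w
  have e1 : TensorProduct.map f (Algebra.linearMap k H ∘ₗ εc) (Δc w)
      = TensorProduct.map f (Algebra.linearMap k H)
          (TensorProduct.map LinearMap.id εc (Δc w)) := by
    rw [map_comp_lid, LinearMap.comp_apply]
  rw [conv_apply, e1, hcu w]
  simp [LinearMap.mul'_apply]

end Conv

end DrinfeldTwistAux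
section Hopf

variable {k : Type*} [Field k] {H : Type*} [Ring H] [HopfAlgebra k H]

local notation "𝒮" => (HopfAlgebra.antipode k : H →ₗ[k] H)
local notation "Δ" => (Coalgebra.comul : H →ₗ[k] H ⊗[k] H)
local notation "ε" => (Coalgebra.counit : H →ₗ[k] k)
local notation "μ" => LinearMap.mul' k H

/-- `sandL (a ⊗ b) x = S(a) * x * b`. -/
noncomputable def sandL : (H ⊗[k] H) →ₗ[k] H →ₗ[k] H :=
  TensorProduct.lift <| LinearMap.mk₂ k
    (fun a b => LinearMap.mulRight k b ∘ₗ LinearMap.mulLeft k (𝒮 a))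
    (fun a a' b => by ext x; simp [add_mul])
    (fun c a b => by ext x; simp [smul_mul_assoc])
    (fun a b b' => by ext x; simp [mul_add])
    (fun c a b => by ext x; simp [mul_smul_comm])

/-- `sandR (a ⊗ b) x = a * x * S(b)`. -/
noncomputable def sandR : (H ⊗[k] H) →ₗ[k] H →ₗ[k] H :=
  TensorProduct.lift <| LinearMap.mk₂ k
    (fun a b => LinearMap.mulRight k (𝒮 b) ∘ₗ LinearMap.mulLeft k a)
    (fun a a' b => by ext x; simp [add_mul])
    (fun c a b => by ext x; simp [smul_mul_assoc])
    (fun a b b' => by ext x; simp [mul_add])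
    (fun c a b => by ext x; simp [mul_smul_comm])

@[simp] lemma sandL_tmul (a b x : H) : sandL (a ⊗ₜ[k] b) x = 𝒮 a * x * b := rfl

@[simp] lemma sandR_tmul (a b x : H) : sandR (a ⊗ₜ[k] b) x = a * x * 𝒮 b := rfl

lemma sandL_one (t : H ⊗[k] H) :
    sandL t 1 = μ (TensorProduct.map 𝒮 LinearMap.id t) := by
  induction t using TensorProduct.induction_on with
  | zero => simp
  | tmul a b => simp [LinearMap.mul'_apply]
  | add x y hx hy => simp [map_add, hx, hy]

lemma sandR_one (t : H ⊗[k] H) :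
    sandR t 1 = μ (TensorProduct.map LinearMap.id 𝒮 t) := by
  induction t using TensorProduct.induction_on with
  | zero => simp
  | tmul a b => simp [LinearMap.mul'_apply]
  | add x y hx hy => simp [map_add, hx, hy]

lemma anti_r (a : H) : μ (TensorProduct.map 𝒮 LinearMap.id (Δ a)) = algebraMap k H (ε a) :=
  HopfAlgebra.mul_antipode_rTensor_comul_apply a

lemma anti_l (a : H) : μ (TensorProduct.map LinearMap.id 𝒮 (Δ a)) = algebraMap k H (ε a) :=
  HopfAlgebra.mul_antipode_lTensor_comul_apply a

lemma antipode_one' : 𝒮 (1 : H) = 1 := by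
  have h := anti_r (k := k) (1 : H)
  rw [Bialgebra.comul_one, Algebra.TensorProduct.one_def] at h
  simpa [LinearMap.mul'_apply] using h

end Hopf
section Antimul

variable {k : Type*} [Field k] {H : Type*} [Ring H] [HopfAlgebra k H]

local notation "𝒮" => (HopfAlgebra.antipode k : H →ₗ[k] H)
local notation "Δ" => (Coalgebra.comul : H →ₗ[k] H ⊗[k] H)
local notation "ε" => (Coalgebra.counit : H →ₗ[k] k)
local notation "μ" => LinearMap.mul' k H

variable (k H) in
/-- middle-swap map -/
noncomputable def τH : ((H ⊗[k] H) ⊗[k] (H ⊗[k] H)) →ₗ[k] ((H ⊗[k] H) ⊗[k] (H ⊗[k] H)) :=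
  (TensorProduct.tensorTensorTensorComm k H H H H).toLinearMap

variable (k H) in
/-- comultiplication on `H ⊗ H` -/
noncomputable def ΔC : (H ⊗[k] H) →ₗ[k] (H ⊗[k] H) ⊗[k] (H ⊗[k] H) :=
  τH k H ∘ₗ TensorProduct.map Δ Δ

variable (k H) in
/-- counit on `H ⊗ H` -/
noncomputable def εC : (H ⊗[k] H) →ₗ[k] k :=
  LinearMap.mul' k k ∘ₗ TensorProduct.map ε ε

@[simp] lemma τH_tmul (a b c d : H) :
    τH k H ((a ⊗ₜ b) ⊗ₜ (c ⊗ₜ d)) = (a ⊗ₜ c) ⊗ₜ (b ⊗ₜ d) := rfl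

lemma ΔC_tmul (a b : H) : ΔC k H (a ⊗ₜ b) = τH k H (Δ a ⊗ₜ Δ b) := rfl

@[simp] lemma εC_tmul (a b : H) : εC k H (a ⊗ₜ b) = ε a * ε b := rfl

variable (k H) in
noncomputable def σ1 : (((H ⊗[k] H) ⊗[k] H) ⊗[k] ((H ⊗[k] H) ⊗[k] H)) →ₗ[k]
    ((H ⊗[k] H) ⊗[k] (H ⊗[k] H)) ⊗[k] (H ⊗[k] H) :=
  TensorProduct.map (τH k H) LinearMap.id ∘ₗ
    (TensorProduct.tensorTensorTensorComm k (H ⊗[k] H) H (H ⊗[k] H) H).toLinearMap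

variable (k H) in
noncomputable def σ2 : ((H ⊗[k] (H ⊗[k] H)) ⊗[k] (H ⊗[k] (H ⊗[k] H))) →ₗ[k]
    (H ⊗[k] H) ⊗[k] ((H ⊗[k] H) ⊗[k] (H ⊗[k] H)) :=
  TensorProduct.map LinearMap.id (τH k H) ∘ₗ
    (TensorProduct.tensorTensorTensorComm k H (H ⊗[k] H) H (H ⊗[k] H)).toLinearMap

lemma claimA (s t : H ⊗[k] H) :
    TensorProduct.map (ΔC k H) LinearMap.id (τH k H (s ⊗ₜ t))
      = σ1 k H ((TensorProduct.map Δ LinearMap.id s) ⊗ₜ (TensorProduct.map Δ LinearMap.id t)) := by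
  induction s using TensorProduct.induction_on with
  | zero => simp only [zero_tmul, LinearMap.map_zero]
  | tmul a b =>
    induction t using TensorProduct.induction_on with
    | zero => simp only [tmul_zero, LinearMap.map_zero]
    | tmul c d => simp [τH, σ1, ΔC_tmul]
    | add x y hx hy => simp only [tmul_add, map_add, hx, hy]
  | add x y hx hy => simp only [add_tmul, map_add, hx, hy]

lemma claimB (s t : H ⊗[k] H) :
    TensorProduct.map LinearMap.id (ΔC k H) (τH k H (s ⊗ₜ t))
      = σ2 k H ((TensorProduct.map LinearMap.id Δ s) ⊗ₜ (TensorProduct.map LinearMap.id Δ t)) := by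
  induction s using TensorProduct.induction_on with
  | zero => simp only [zero_tmul, LinearMap.map_zero]
  | tmul a b =>
    induction t using TensorProduct.induction_on with
    | zero => simp only [tmul_zero, LinearMap.map_zero]
    | tmul c d => simp [τH, σ2, ΔC_tmul]
    | add x y hx hy => simp only [tmul_add, map_add, hx, hy]
  | add x y hx hy => simp only [add_tmul, map_add, hx, hy]

lemma claimC :
    σ1 k H ∘ₗ TensorProduct.map (TensorProduct.assoc k H H H).symm.toLinearMap
        (TensorProduct.assoc k H H H).symm.toLinearMap
      = (TensorProduct.assoc k (H ⊗[k] H) (H ⊗[k] H) (H ⊗[k] H)).symm.toLinearMap ∘ₗ σ2 k H := by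
  ext x1 x2 x3 y1 y2 y3
  simp [σ1, σ2, τH]

end Antimul
section Antimul2

variable {k : Type*} [Field k] {H : Type*} [Ring H] [HopfAlgebra k H]

local notation "𝒮" => (HopfAlgebra.antipode k : H →ₗ[k] H)
local notation "Δ" => (Coalgebra.comul : H →ₗ[k] H ⊗[k] H)
local notation "ε" => (Coalgebra.counit : H →ₗ[k] k)
local notation "μ" => LinearMap.mul' k H

lemma hcoC (w : H ⊗[k] H) :
    TensorProduct.map (ΔC k H) LinearMap.id (ΔC k H w)
      = (TensorProduct.assoc k (H ⊗[k] H) (H ⊗[k] H) (H ⊗[k] H)).symm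
          (TensorProduct.map LinearMap.id (ΔC k H) (ΔC k H w)) := by
  induction w using TensorProduct.induction_on with
  | zero =>
    simp only [LinearMap.map_zero]
    exact (LinearEquiv.map_zero _).symm
  | tmul a b =>
    rw [ΔC_tmul, claimA, claimB]
    have ha : TensorProduct.map Δ LinearMap.id (Δ a)
        = (TensorProduct.assoc k H H H).symm (TensorProduct.map LinearMap.id Δ (Δ a)) :=
      (Coalgebra.coassoc_symm_apply a).symm
    have hb : TensorProduct.map Δ LinearMap.id (Δ b)
        = (TensorProduct.assoc k H H H).symm (TensorProduct.map LinearMap.id Δ (Δ b)) :=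
      (Coalgebra.coassoc_symm_apply b).symm
    rw [ha, hb]
    have := LinearMap.congr_fun (claimC (k := k) (H := H))
      ((TensorProduct.map LinearMap.id Δ (Δ a)) ⊗ₜ (TensorProduct.map LinearMap.id Δ (Δ b)))
    simpa using this
  | add x y hx hy =>
    simp only [LinearMap.map_add, hx, hy]
    exact (LinearEquiv.map_add _ _ _).symm

lemma hcuC_left (w : H ⊗[k] H) :
    TensorProduct.map (εC k H) LinearMap.id (ΔC k H w) = (1 : k) ⊗ₜ[k] w := by
  induction w using TensorProduct.induction_on with
  | zero => simp only [LinearMap.map_zero, tmul_zero]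
  | tmul a b =>
    rw [ΔC_tmul]
    have key : ∀ s t : H ⊗[k] H,
        TensorProduct.map (εC k H) LinearMap.id (τH k H (s ⊗ₜ t))
          = (TensorProduct.map (LinearMap.mul' k k) LinearMap.id ∘ₗ
              (TensorProduct.tensorTensorTensorComm k k H k H).toLinearMap)
              ((TensorProduct.map ε LinearMap.id s) ⊗ₜ (TensorProduct.map ε LinearMap.id t)) := by
      intro s t
      induction s using TensorProduct.induction_on with
      | zero => simp only [zero_tmul, LinearMap.map_zero]
      | tmul a b =>
        induction t using TensorProduct.induction_on with
        | zero => simp only [tmul_zero, LinearMap.map_zero]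
        | tmul c d => simp [τH, LinearMap.mul'_apply]
        | add x y hx hy => simp only [tmul_add, LinearMap.map_add, hx, hy]
      | add x y hx hy => simp only [add_tmul, LinearMap.map_add, hx, hy]
    rw [key (Δ a) (Δ b)]
    have ha : TensorProduct.map ε LinearMap.id (Δ a) = (1 : k) ⊗ₜ[k] a :=
      Coalgebra.rTensor_counit_comul a
    have hb : TensorProduct.map ε LinearMap.id (Δ b) = (1 : k) ⊗ₜ[k] b :=
      Coalgebra.rTensor_counit_comul b
    rw [ha, hb]
    simp [LinearMap.mul'_apply]
  | add x y hx hy => simp only [LinearMap.map_add, hx, hy, tmul_add]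

lemma hcuC_right (w : H ⊗[k] H) :
    TensorProduct.map LinearMap.id (εC k H) (ΔC k H w) = w ⊗ₜ[k] (1 : k) := by
  induction w using TensorProduct.induction_on with
  | zero => simp only [LinearMap.map_zero, zero_tmul]
  | tmul a b =>
    rw [ΔC_tmul]
    have key : ∀ s t : H ⊗[k] H,
        TensorProduct.map LinearMap.id (εC k H) (τH k H (s ⊗ₜ t))
          = (TensorProduct.map LinearMap.id (LinearMap.mul' k k) ∘ₗ
              (TensorProduct.tensorTensorTensorComm k H k H k).toLinearMap)
              ((TensorProduct.map LinearMap.id ε s) ⊗ₜ (TensorProduct.map LinearMap.id ε t)) := by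
      intro s t
      induction s using TensorProduct.induction_on with
      | zero => simp only [zero_tmul, LinearMap.map_zero]
      | tmul a b =>
        induction t using TensorProduct.induction_on with
        | zero => simp only [tmul_zero, LinearMap.map_zero]
        | tmul c d => simp [τH, LinearMap.mul'_apply]
        | add x y hx hy => simp only [tmul_add, LinearMap.map_add, hx, hy]
      | add x y hx hy => simp only [add_tmul, LinearMap.map_add, hx, hy]
    rw [key (Δ a) (Δ b)]
    have ha : TensorProduct.map LinearMap.id ε (Δ a) = a ⊗ₜ[k] (1 : k) :=
      Coalgebra.lTensor_counit_comul a
    have hb : TensorProduct.map LinearMap.id ε (Δ b) = b ⊗ₜ[k] (1 : k) :=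
      Coalgebra.lTensor_counit_comul b
    rw [ha, hb]
    simp [LinearMap.mul'_apply]
  | add x y hx hy => simp only [LinearMap.map_add, hx, hy, add_tmul]

lemma muco (w : H ⊗[k] H) :
    TensorProduct.map μ μ (ΔC k H w) = Δ (μ w) := by
  induction w using TensorProduct.induction_on with
  | zero => simp only [LinearMap.map_zero]
  | tmul a b =>
    rw [ΔC_tmul]
    have key : ∀ s t : H ⊗[k] H,
        TensorProduct.map μ μ (τH k H (s ⊗ₜ t)) = s * t := by
      intro s t
      induction s using TensorProduct.induction_on with
      | zero => simp only [zero_tmul, LinearMap.map_zero, zero_mul]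
      | tmul a b =>
        induction t using TensorProduct.induction_on with
        | zero => simp only [tmul_zero, LinearMap.map_zero, mul_zero]
        | tmul c d => simp [τH, LinearMap.mul'_apply, Algebra.TensorProduct.tmul_mul_tmul]
        | add x y hx hy => simp only [tmul_add, LinearMap.map_add, hx, hy, mul_add]
      | add x y hx hy => simp only [add_tmul, LinearMap.map_add, hx, hy, add_mul]
    rw [key (Δ a) (Δ b), LinearMap.mul'_apply, ← Bialgebra.comul_mul]
  | add x y hx hy => simp only [LinearMap.map_add, hx, hy]

lemma epsmu (w : H ⊗[k] H) : ε (μ w) = εC k H w := by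
  induction w using TensorProduct.induction_on with
  | zero => simp only [LinearMap.map_zero]
  | tmul a b => simp [LinearMap.mul'_apply]
  | add x y hx hy => simp only [LinearMap.map_add, hx, hy]

end Antimul2
section Antimul3

variable {k : Type*} [Field k] {H : Type*} [Ring H] [HopfAlgebra k H]

local notation "𝒮" => (HopfAlgebra.antipode k : H →ₗ[k] H)
local notation "Δ" => (Coalgebra.comul : H →ₗ[k] H ⊗[k] H)
local notation "ε" => (Coalgebra.counit : H →ₗ[k] k)
local notation "μ" => LinearMap.mul' k H

variable (k H) in
noncomputable def Nmap : (H ⊗[k] H) →ₗ[k] H :=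
  μ ∘ₗ TensorProduct.map 𝒮 𝒮 ∘ₗ (TensorProduct.comm k H H).toLinearMap

@[simp] lemma Nmap_tmul (a b : H) : Nmap k H (a ⊗ₜ b) = 𝒮 b * 𝒮 a := by
  simp [Nmap, LinearMap.mul'_apply]

lemma conv_TM : DrinfeldTwistAux.conv (ΔC k H) (𝒮 ∘ₗ μ) μ
    = Algebra.linearMap k H ∘ₗ εC k H := by
  apply LinearMap.ext; intro w
  rw [DrinfeldTwistAux.conv_apply]
  have e : TensorProduct.map (𝒮 ∘ₗ μ) μ (ΔC k H w)
      = TensorProduct.map 𝒮 LinearMap.id (TensorProduct.map μ μ (ΔC k H w)) := by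
    have := LinearMap.congr_fun
      (TensorProduct.map_comp 𝒮 (LinearMap.id : H →ₗ[k] H) μ μ) (ΔC k H w)
    simpa using this
  rw [e, muco, anti_r, epsmu]
  rfl

lemma conv_MN : DrinfeldTwistAux.conv (ΔC k H) μ (Nmap k H)
    = Algebra.linearMap k H ∘ₗ εC k H := by
  apply LinearMap.ext; intro w
  rw [DrinfeldTwistAux.conv_apply]
  induction w using TensorProduct.induction_on with
  | zero => simp only [LinearMap.map_zero]
  | tmul a b =>
    rw [ΔC_tmul]
    have key : ∀ s t : H ⊗[k] H,
        μ (TensorProduct.map μ (Nmap k H) (τH k H (s ⊗ₜ t)))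
          = sandR s (μ (TensorProduct.map LinearMap.id 𝒮 t)) := by
      intro s t
      induction s using TensorProduct.induction_on with
      | zero => simp only [zero_tmul, LinearMap.map_zero, LinearMap.zero_apply]
      | tmul a b =>
        induction t using TensorProduct.induction_on with
        | zero => simp only [tmul_zero, LinearMap.map_zero]
        | tmul c d => simp [τH, LinearMap.mul'_apply, mul_assoc]
        | add x y hx hy => simp only [tmul_add, LinearMap.map_add, hx, hy]
      | add x y hx hy =>
        simp only [add_tmul, LinearMap.map_add, hx, hy, LinearMap.add_apply]
    rw [key (Δ a) (Δ b), anti_l]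
    rw [Algebra.algebraMap_eq_smul_one, LinearMap.map_smul, sandR_one, anti_l]
    simp [Algebra.smul_def, ← map_mul, mul_comm (ε b) (ε a)]
  | add x y hx hy => simp only [LinearMap.map_add, hx, hy]

theorem antipode_mul' (a b : H) : 𝒮 (a * b) = 𝒮 b * 𝒮 a := by
  have hT : (𝒮 ∘ₗ μ : H ⊗[k] H →ₗ[k] H) = Nmap k H := by
    calc (𝒮 ∘ₗ μ : H ⊗[k] H →ₗ[k] H)
        = DrinfeldTwistAux.conv (ΔC k H) (𝒮 ∘ₗ μ) (Algebra.linearMap k H ∘ₗ εC k H) :=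
          (DrinfeldTwistAux.conv_unit_right (ΔC k H) (εC k H) hcuC_right _).symm
      _ = DrinfeldTwistAux.conv (ΔC k H) (𝒮 ∘ₗ μ)
            (DrinfeldTwistAux.conv (ΔC k H) μ (Nmap k H)) := by rw [conv_MN]
      _ = DrinfeldTwistAux.conv (ΔC k H)
            (DrinfeldTwistAux.conv (ΔC k H) (𝒮 ∘ₗ μ) μ) (Nmap k H) :=
          (DrinfeldTwistAux.conv_assoc (ΔC k H) hcoC _ _ _).symm
      _ = DrinfeldTwistAux.conv (ΔC k H) (Algebra.linearMap k H ∘ₗ εC k H) (Nmap k H) := by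
          rw [conv_TM]
      _ = Nmap k H := DrinfeldTwistAux.conv_unit_left (ΔC k H) (εC k H) hcuC_left _
  have := LinearMap.congr_fun hT (a ⊗ₜ b)
  simpa [LinearMap.mul'_apply] using this

end Antimul3
section Twist1

variable {k : Type*} [Field k] {H : Type*} [Ring H] [HopfAlgebra k H]

local notation "𝒮" => (HopfAlgebra.antipode k : H →ₗ[k] H)
local notation "Δ" => (Coalgebra.comul : H →ₗ[k] H ⊗[k] H)
local notation "ε" => (Coalgebra.counit : H →ₗ[k] k)
local notation "μ" => LinearMap.mul' k H

lemma mulSid (P Q : H ⊗[k] H) :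
    μ (TensorProduct.map 𝒮 LinearMap.id (P * Q))
      = sandL Q (μ (TensorProduct.map 𝒮 LinearMap.id P)) := by
  induction P using TensorProduct.induction_on with
  | zero => simp only [zero_mul, LinearMap.map_zero]
  | tmul a b =>
    induction Q using TensorProduct.induction_on with
    | zero => simp only [mul_zero, LinearMap.map_zero, LinearMap.zero_apply]
    | tmul c d =>
      simp [Algebra.TensorProduct.tmul_mul_tmul, LinearMap.mul'_apply, antipode_mul', mul_assoc]
    | add x y hx hy =>
      simp only [mul_add, LinearMap.map_add, hx, hy, LinearMap.add_apply]
  | add x y hx hy => simp only [add_mul, LinearMap.map_add, hx, hy]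

lemma mulIdS (P Q : H ⊗[k] H) :
    μ (TensorProduct.map LinearMap.id 𝒮 (P * Q))
      = sandR P (μ (TensorProduct.map LinearMap.id 𝒮 Q)) := by
  induction Q using TensorProduct.induction_on with
  | zero => simp only [mul_zero, LinearMap.map_zero]
  | tmul c d =>
    induction P using TensorProduct.induction_on with
    | zero => simp only [zero_mul, LinearMap.map_zero, LinearMap.zero_apply]
    | tmul a b =>
      simp [Algebra.TensorProduct.tmul_mul_tmul, LinearMap.mul'_apply, antipode_mul', mul_assoc]
    | add x y hx hy =>
      simp only [add_mul, LinearMap.map_add, hx, hy, LinearMap.add_apply]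
  | add x y hx hy => simp only [mul_add, LinearMap.map_add, hx, hy]

variable (k H) in
noncomputable def E12 : (H ⊗[k] H) →ₗ[k] H ⊗[k] (H ⊗[k] H) :=
  TensorProduct.map LinearMap.id ((TensorProduct.mk k H H).flip 1)

variable (k H) in
noncomputable def E23 : (H ⊗[k] H) →ₗ[k] H ⊗[k] (H ⊗[k] H) :=
  TensorProduct.mk k H (H ⊗[k] H) 1

variable (k H) in
noncomputable def A1 : (H ⊗[k] H) →ₗ[k] H ⊗[k] (H ⊗[k] H) :=
  (TensorProduct.assoc k H H H).toLinearMap ∘ₗ TensorProduct.map Δ LinearMap.id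

variable (k H) in
noncomputable def A2 : (H ⊗[k] H) →ₗ[k] H ⊗[k] (H ⊗[k] H) :=
  TensorProduct.map LinearMap.id Δ

variable (k H) in
noncomputable def Eps1 : (H ⊗[k] H) →ₗ[k] H :=
  (TensorProduct.lid k H).toLinearMap ∘ₗ TensorProduct.map ε LinearMap.id

variable (k H) in
noncomputable def Eps2 : (H ⊗[k] H) →ₗ[k] H :=
  (TensorProduct.rid k H).toLinearMap ∘ₗ TensorProduct.map LinearMap.id ε

@[simp] lemma E12_tmul (a b : H) : E12 k H (a ⊗ₜ b) = a ⊗ₜ (b ⊗ₜ 1) := rfl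
@[simp] lemma E23_apply (t : H ⊗[k] H) : E23 k H t = 1 ⊗ₜ t := rfl
lemma A1_tmul (a b : H) : A1 k H (a ⊗ₜ b) = (TensorProduct.assoc k H H H) (Δ a ⊗ₜ b) := rfl
@[simp] lemma A2_tmul (a b : H) : A2 k H (a ⊗ₜ b) = a ⊗ₜ Δ b := rfl
@[simp] lemma Eps1_tmul (a b : H) : Eps1 k H (a ⊗ₜ b) = ε a • b := rfl
@[simp] lemma Eps2_tmul (a b : H) : Eps2 k H (a ⊗ₜ b) = ε b • a := by
  simp [Eps2]

lemma triple_one : (1 : H ⊗[k] (H ⊗[k] H)) = 1 ⊗ₜ (1 ⊗ₜ 1) := by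
  rw [Algebra.TensorProduct.one_def, Algebra.TensorProduct.one_def]

lemma E12_mul (P Q : H ⊗[k] H) : E12 k H (P * Q) = E12 k H P * E12 k H Q := by
  induction P using TensorProduct.induction_on with
  | zero => simp only [zero_mul, LinearMap.map_zero]
  | tmul a b =>
    induction Q using TensorProduct.induction_on with
    | zero => simp only [mul_zero, LinearMap.map_zero]
    | tmul c d => simp [Algebra.TensorProduct.tmul_mul_tmul]
    | add x y hx hy => simp only [mul_add, LinearMap.map_add, hx, hy]
  | add x y hx hy => simp only [add_mul, LinearMap.map_add, hx, hy]

lemma E12_one : E12 k H 1 = 1 := by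
  rw [Algebra.TensorProduct.one_def, E12_tmul, ← triple_one]

lemma E23_mul (P Q : H ⊗[k] H) : E23 k H (P * Q) = E23 k H P * E23 k H Q := by
  simp [Algebra.TensorProduct.tmul_mul_tmul]

lemma E23_one : E23 k H 1 = 1 := by
  rw [E23_apply, triple_one, Algebra.TensorProduct.one_def]

lemma A1_mul (P Q : H ⊗[k] H) : A1 k H (P * Q) = A1 k H P * A1 k H Q := by
  have key : ∀ (s t : H ⊗[k] H) (b d : H),
      (TensorProduct.assoc k H H H) ((s * t) ⊗ₜ (b * d))
        = (TensorProduct.assoc k H H H) (s ⊗ₜ b) * (TensorProduct.assoc k H H H) (t ⊗ₜ d) := by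
    intro s t b d
    induction s using TensorProduct.induction_on with
    | zero => simp only [zero_mul, zero_tmul, LinearEquiv.map_zero]
    | tmul a1 a2 =>
      induction t using TensorProduct.induction_on with
      | zero => simp only [mul_zero, zero_tmul, LinearEquiv.map_zero]
      | tmul c1 c2 => simp [Algebra.TensorProduct.tmul_mul_tmul]
      | add x y hx hy =>
        simp only [mul_add, add_tmul, LinearEquiv.map_add, hx, hy]
    | add x y hx hy => simp only [add_mul, add_tmul, LinearEquiv.map_add, hx, hy]
  induction P using TensorProduct.induction_on with
  | zero => simp only [zero_mul, LinearMap.map_zero]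
  | tmul a b =>
    induction Q using TensorProduct.induction_on with
    | zero => simp only [mul_zero, LinearMap.map_zero]
    | tmul c d =>
      simp only [Algebra.TensorProduct.tmul_mul_tmul, A1, LinearMap.comp_apply,
        TensorProduct.map_tmul, LinearMap.id_apply, Bialgebra.comul_mul]
      exact key (Δ a) (Δ c) b d
    | add x y hx hy => simp only [mul_add, LinearMap.map_add, hx, hy]
  | add x y hx hy => simp only [add_mul, LinearMap.map_add, hx, hy]

lemma A1_one : A1 k H 1 = 1 := by
  rw [Algebra.TensorProduct.one_def, A1_tmul, Bialgebra.comul_one,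
    Algebra.TensorProduct.one_def]
  simp only [TensorProduct.assoc_tmul]
  rw [← triple_one]

lemma A2_mul (P Q : H ⊗[k] H) : A2 k H (P * Q) = A2 k H P * A2 k H Q := by
  induction P using TensorProduct.induction_on with
  | zero => simp only [zero_mul, LinearMap.map_zero]
  | tmul a b =>
    induction Q using TensorProduct.induction_on with
    | zero => simp only [mul_zero, LinearMap.map_zero]
    | tmul c d => simp [Algebra.TensorProduct.tmul_mul_tmul]
    | add x y hx hy => simp only [mul_add, LinearMap.map_add, hx, hy]
  | add x y hx hy => simp only [add_mul, LinearMap.map_add, hx, hy]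

lemma A2_one : A2 k H 1 = 1 := by
  rw [Algebra.TensorProduct.one_def, A2_tmul, Bialgebra.comul_one, triple_one,
    Algebra.TensorProduct.one_def]

lemma Eps1_mul (P Q : H ⊗[k] H) : Eps1 k H (P * Q) = Eps1 k H P * Eps1 k H Q := by
  induction P using TensorProduct.induction_on with
  | zero => simp only [zero_mul, LinearMap.map_zero]
  | tmul a b =>
    induction Q using TensorProduct.induction_on with
    | zero => simp only [mul_zero, LinearMap.map_zero]
    | tmul c d =>
      simp [Algebra.TensorProduct.tmul_mul_tmul, smul_mul_assoc, mul_smul_comm, smul_smul,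
        mul_comm (ε a) (ε c)]
    | add x y hx hy => simp only [mul_add, LinearMap.map_add, hx, hy]
  | add x y hx hy => simp only [add_mul, LinearMap.map_add, hx, hy]

lemma Eps2_mul (P Q : H ⊗[k] H) : Eps2 k H (P * Q) = Eps2 k H P * Eps2 k H Q := by
  induction P using TensorProduct.induction_on with
  | zero => simp only [zero_mul, LinearMap.map_zero]
  | tmul a b =>
    induction Q using TensorProduct.induction_on with
    | zero => simp only [mul_zero, LinearMap.map_zero]
    | tmul c d =>
      simp [Algebra.TensorProduct.tmul_mul_tmul, smul_mul_assoc, mul_smul_comm, smul_smul,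
        mul_comm (ε b) (ε d)]
    | add x y hx hy => simp only [mul_add, LinearMap.map_add, hx, hy]
  | add x y hx hy => simp only [add_mul, LinearMap.map_add, hx, hy]

end Twist1
section Twist2

variable {k : Type*} [Field k] {H : Type*} [Ring H] [HopfAlgebra k H]

local notation "𝒮" => (HopfAlgebra.antipode k : H →ₗ[k] H)
local notation "Δ" => (Coalgebra.comul : H →ₗ[k] H ⊗[k] H)
local notation "ε" => (Coalgebra.counit : H →ₗ[k] k)
local notation "μ" => LinearMap.mul' k H

variable (k H) in
noncomputable def Phi : H ⊗[k] (H ⊗[k] H) →ₗ[k] H :=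
  μ ∘ₗ TensorProduct.map LinearMap.id (μ ∘ₗ TensorProduct.map 𝒮 LinearMap.id)

variable (k H) in
noncomputable def Psi : H ⊗[k] (H ⊗[k] H) →ₗ[k] H :=
  μ ∘ₗ TensorProduct.map 𝒮 (μ ∘ₗ TensorProduct.map LinearMap.id 𝒮)

@[simp] lemma Phi_tmul (x y z : H) : Phi k H (x ⊗ₜ (y ⊗ₜ z)) = x * (𝒮 y * z) := by
  simp [Phi, LinearMap.mul'_apply]

@[simp] lemma Psi_tmul (x y z : H) : Psi k H (x ⊗ₜ (y ⊗ₜ z)) = 𝒮 x * (y * 𝒮 z) := by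
  simp [Psi, LinearMap.mul'_apply]

lemma R1 (P Q : H ⊗[k] H) :
    Phi k H (E23 k H Q * E12 k H P)
      = μ (TensorProduct.map LinearMap.id 𝒮 P) * μ (TensorProduct.map 𝒮 LinearMap.id Q) := by
  induction P using TensorProduct.induction_on with
  | zero => simp only [LinearMap.map_zero, mul_zero, zero_mul, LinearMap.map_zero]
  | tmul a b =>
    induction Q using TensorProduct.induction_on with
    | zero => simp only [LinearMap.map_zero, zero_mul, mul_zero, LinearMap.map_zero]
    | tmul c d =>
      simp [Algebra.TensorProduct.tmul_mul_tmul, LinearMap.mul'_apply, antipode_mul', mul_assoc]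
    | add x y hx hy =>
      simp only [LinearMap.map_add, add_mul, mul_add, hx, hy]
  | add x y hx hy => simp only [LinearMap.map_add, add_mul, mul_add, hx, hy]

lemma G1 (a d : H) (t s : H ⊗[k] H) :
    Phi k H ((a ⊗ₜ t) * (TensorProduct.assoc k H H H (s ⊗ₜ d)))
      = a * μ (TensorProduct.map LinearMap.id 𝒮 s)
          * μ (TensorProduct.map 𝒮 LinearMap.id t) * d := by
  induction s using TensorProduct.induction_on with
  | zero => simp only [zero_tmul, LinearEquiv.map_zero, mul_zero, LinearMap.map_zero,
      zero_mul, mul_zero]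
  | tmul c1 c2 =>
    induction t using TensorProduct.induction_on with
    | zero => simp only [tmul_zero, LinearMap.map_zero, zero_mul, mul_zero, zero_mul]
    | tmul b1 b2 =>
      simp [Algebra.TensorProduct.tmul_mul_tmul, LinearMap.mul'_apply, antipode_mul', mul_assoc]
    | add x y hx hy =>
      simp only [tmul_add, add_mul, LinearMap.map_add, hx, hy, mul_add, add_mul]
  | add x y hx hy =>
    simp only [add_tmul, LinearEquiv.map_add, mul_add, LinearMap.map_add, hx, hy, add_mul]

lemma R2 (P Q : H ⊗[k] H) :
    Phi k H (A2 k H P * A1 k H Q) = Eps2 k H P * Eps1 k H Q := by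
  induction P using TensorProduct.induction_on with
  | zero => simp only [LinearMap.map_zero, zero_mul]
  | tmul a b =>
    induction Q using TensorProduct.induction_on with
    | zero => simp only [LinearMap.map_zero, mul_zero]
    | tmul c d =>
      rw [A2_tmul, A1_tmul, G1, anti_l, anti_r]
      simp [Algebra.algebraMap_eq_smul_one, mul_smul_comm, smul_mul_assoc, smul_smul,
        mul_comm (ε b) (ε c)]
    | add x y hx hy => simp only [LinearMap.map_add, mul_add, add_mul, hx, hy]
  | add x y hx hy => simp only [LinearMap.map_add, add_mul, mul_add, hx, hy]

lemma R3 (Q P : H ⊗[k] H) :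
    Psi k H (E12 k H Q * E23 k H P)
      = μ (TensorProduct.map 𝒮 LinearMap.id Q) * μ (TensorProduct.map LinearMap.id 𝒮 P) := by
  induction Q using TensorProduct.induction_on with
  | zero => simp only [LinearMap.map_zero, zero_mul, mul_zero]
  | tmul c d =>
    induction P using TensorProduct.induction_on with
    | zero => simp only [LinearMap.map_zero, zero_mul, mul_zero]
    | tmul a b =>
      simp [Algebra.TensorProduct.tmul_mul_tmul, LinearMap.mul'_apply, antipode_mul', mul_assoc]
    | add x y hx hy => simp only [LinearMap.map_add, mul_add, hx, hy]
  | add x y hx hy => simp only [LinearMap.map_add, add_mul, mul_add, hx, hy]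

lemma G2 (b c : H) (s t : H ⊗[k] H) :
    Psi k H ((TensorProduct.assoc k H H H (s ⊗ₜ b)) * (c ⊗ₜ t))
      = 𝒮 c * μ (TensorProduct.map 𝒮 LinearMap.id s)
          * μ (TensorProduct.map LinearMap.id 𝒮 t) * 𝒮 b := by
  induction s using TensorProduct.induction_on with
  | zero => simp only [zero_tmul, LinearEquiv.map_zero, zero_mul, LinearMap.map_zero,
      mul_zero]
  | tmul a1 a2 =>
    induction t using TensorProduct.induction_on with
    | zero => simp only [tmul_zero, LinearMap.map_zero, mul_zero, zero_mul, mul_zero]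
    | tmul d1 d2 =>
      simp [Algebra.TensorProduct.tmul_mul_tmul, LinearMap.mul'_apply, antipode_mul', mul_assoc]
    | add x y hx hy =>
      simp only [tmul_add, mul_add, LinearMap.map_add, hx, hy, add_mul, mul_add]
  | add x y hx hy =>
    simp only [add_tmul, LinearEquiv.map_add, add_mul, LinearMap.map_add, hx, hy, mul_add]

lemma R4 (P Q : H ⊗[k] H) :
    Psi k H (A1 k H P * A2 k H Q) = 𝒮 (Eps2 k H Q) * 𝒮 (Eps1 k H P) := by
  induction P using TensorProduct.induction_on with
  | zero => simp only [LinearMap.map_zero, zero_mul, mul_zero]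
  | tmul a b =>
    induction Q using TensorProduct.induction_on with
    | zero => simp only [LinearMap.map_zero, zero_mul, mul_zero]
    | tmul c d =>
      rw [A1_tmul, A2_tmul, G2, anti_r, anti_l]
      simp [Algebra.algebraMap_eq_smul_one, mul_smul_comm, smul_mul_assoc, smul_smul,
        mul_comm (ε a) (ε d)]
    | add x y hx hy => simp only [LinearMap.map_add, mul_add, add_mul, hx, hy]
  | add x y hx hy => simp only [LinearMap.map_add, add_mul, mul_add, hx, hy]

lemma Eps1_one : Eps1 k H 1 = 1 := by
  rw [Algebra.TensorProduct.one_def, Eps1_tmul, Bialgebra.counit_one, one_smul]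

lemma Eps2_one : Eps2 k H 1 = 1 := by
  rw [Algebra.TensorProduct.one_def, Eps2_tmul, Bialgebra.counit_one, one_smul]

lemma T1 (uu vv : H) (r : H ⊗[k] H) :
    μ (TensorProduct.map (LinearMap.mulRight k vv ∘ₗ LinearMap.mulLeft k uu ∘ₗ 𝒮)
        LinearMap.id r)
      = uu * μ (TensorProduct.map 𝒮 LinearMap.id (((1 : H) ⊗ₜ[k] vv) * r)) := by
  induction r using TensorProduct.induction_on with
  | zero => simp only [LinearMap.map_zero, mul_zero]
  | tmul x y => simp [Algebra.TensorProduct.tmul_mul_tmul, LinearMap.mul'_apply, mul_assoc]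
  | add x y hx hy => simp only [LinearMap.map_add, mul_add, hx, hy]

lemma T2 (uu vv : H) (r : H ⊗[k] H) :
    μ (TensorProduct.map LinearMap.id
        (LinearMap.mulRight k vv ∘ₗ LinearMap.mulLeft k uu ∘ₗ 𝒮) r)
      = μ (TensorProduct.map LinearMap.id 𝒮 (r * (uu ⊗ₜ[k] (1 : H)))) * vv := by
  induction r using TensorProduct.induction_on with
  | zero => simp only [LinearMap.map_zero, zero_mul]
  | tmul x y => simp [Algebra.TensorProduct.tmul_mul_tmul, LinearMap.mul'_apply, mul_assoc]
  | add x y hx hy => simp only [LinearMap.map_add, add_mul, hx, hy]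

end Twist2
section Main

variable {k : Type*} [Field k] {H : Type*} [Ring H] [HopfAlgebra k H]

local notation "𝒮" => (HopfAlgebra.antipode k : H →ₗ[k] H)
local notation "Δ" => (Coalgebra.comul : H →ₗ[k] H ⊗[k] H)
local notation "ε" => (Coalgebra.counit : H →ₗ[k] k)
local notation "μ" => LinearMap.mul' k H

theorem twisted_antipode_main (F Finv : H ⊗[k] H) (hinv : F * Finv = 1 ∧ Finv * F = 1)
    (hcoc : E12 k H F * A1 k H F = E23 k H F * A2 k H F)
    (hcu : Eps1 k H F = 1 ∧ Eps2 k H F = 1) :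
    (μ (TensorProduct.map LinearMap.id 𝒮 F) * μ (TensorProduct.map 𝒮 LinearMap.id Finv) = 1 ∧
      μ (TensorProduct.map 𝒮 LinearMap.id Finv) * μ (TensorProduct.map LinearMap.id 𝒮 F) = 1) ∧
    (∀ a : H,
      μ (TensorProduct.map
          (LinearMap.mulRight k (μ (TensorProduct.map 𝒮 LinearMap.id Finv)) ∘ₗ
            LinearMap.mulLeft k (μ (TensorProduct.map LinearMap.id 𝒮 F)) ∘ₗ 𝒮)
          LinearMap.id (F * Δ a * Finv)) = algebraMap k H (ε a) ∧
      μ (TensorProduct.map LinearMap.id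
          (LinearMap.mulRight k (μ (TensorProduct.map 𝒮 LinearMap.id Finv)) ∘ₗ
            LinearMap.mulLeft k (μ (TensorProduct.map LinearMap.id 𝒮 F)) ∘ₗ 𝒮)
          (F * Δ a * Finv)) = algebraMap k H (ε a)) := by
  set u : H := μ (TensorProduct.map LinearMap.id 𝒮 F) with hu
  set v : H := μ (TensorProduct.map 𝒮 LinearMap.id Finv) with hv
  -- counit conditions for the inverse
  have hE1Finv : Eps1 k H Finv = 1 := by
    have h := Eps1_mul Finv F
    rw [hinv.2, Eps1_one, hcu.1, mul_one] at h
    exact h.symm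
  have hE2Finv : Eps2 k H Finv = 1 := by
    have h := Eps2_mul Finv F
    rw [hinv.2, Eps2_one, hcu.2, mul_one] at h
    exact h.symm
  -- rearranged cocycle identities
  have eq1 : E23 k H Finv * E12 k H F = A2 k H F * A1 k H Finv := by
    have h := congrArg (fun X => E23 k H Finv * X * A1 k H Finv) hcoc
    have l : E23 k H Finv * (E12 k H F * A1 k H F) * A1 k H Finv
        = E23 k H Finv * E12 k H F := by
      simp only [mul_assoc]
      rw [← A1_mul, hinv.1, A1_one, mul_one]
    have r : E23 k H Finv * (E23 k H F * A2 k H F) * A1 k H Finv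
        = A2 k H F * A1 k H Finv := by
      rw [← mul_assoc (E23 k H Finv) (E23 k H F) (A2 k H F), ← E23_mul, hinv.2, E23_one,
        one_mul]
    exact l.symm.trans (h.trans r)
  have eq2 : E12 k H Finv * E23 k H F = A1 k H F * A2 k H Finv := by
    have h := congrArg (fun X => E12 k H Finv * X * A2 k H Finv) hcoc.symm
    have l : E12 k H Finv * (E23 k H F * A2 k H F) * A2 k H Finv
        = E12 k H Finv * E23 k H F := by
      simp only [mul_assoc]
      rw [← A2_mul, hinv.1, A2_one, mul_one]
    have r : E12 k H Finv * (E12 k H F * A1 k H F) * A2 k H Finv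
        = A1 k H F * A2 k H Finv := by
      rw [← mul_assoc (E12 k H Finv) (E12 k H F) (A1 k H F), ← E12_mul, hinv.2, E12_one,
        one_mul]
    exact l.symm.trans (h.trans r)
  -- u * v = 1
  have huv : u * v = 1 := by
    have r1 := R1 (k := k) (H := H) F Finv
    rw [eq1, R2] at r1
    rw [hu, hv, ← r1, hcu.2, hE1Finv, one_mul]
  -- v * u = 1
  have hvu : v * u = 1 := by
    have r3 := R3 (k := k) (H := H) Finv F
    rw [eq2, R4] at r3
    rw [hv, hu, ← r3, hE2Finv, hcu.1, antipode_one', one_mul]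
  -- sandwich identities
  have L1 : sandL F v = 1 := by
    have h := mulSid Finv F
    rw [hinv.2, Algebra.TensorProduct.one_def] at h
    simp only [TensorProduct.map_tmul, LinearMap.id_apply, LinearMap.mul'_apply,
      antipode_one', one_mul] at h
    exact h.symm
  have L2 : sandR Finv u = 1 := by
    have h := mulIdS Finv F
    rw [hinv.2, Algebra.TensorProduct.one_def] at h
    simp only [TensorProduct.map_tmul, LinearMap.id_apply, LinearMap.mul'_apply,
      antipode_one', mul_one] at h
    exact h.symm
  refine ⟨⟨huv, hvu⟩, fun a => ⟨?_, ?_⟩⟩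
  · -- left antipode property
    rw [T1 u v (F * Δ a * Finv)]
    have e : ((1 : H) ⊗ₜ[k] v) * (F * Δ a * Finv)
        = ((((1 : H) ⊗ₜ[k] v) * F) * Δ a) * Finv := by
      simp only [mul_assoc]
    rw [e, mulSid, mulSid, mulSid]
    have h0 : μ (TensorProduct.map 𝒮 LinearMap.id ((1 : H) ⊗ₜ[k] v)) = v := by
      simp [LinearMap.mul'_apply, antipode_one']
    rw [h0, L1, sandL_one, anti_r, Algebra.algebraMap_eq_smul_one, LinearMap.map_smul,
      sandL_one, ← hv]
    rw [mul_smul_comm, huv]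
  · -- right antipode property
    rw [T2 u v (F * Δ a * Finv)]
    have e : (F * Δ a * Finv) * ((u : H) ⊗ₜ[k] (1 : H))
        = F * (Δ a * (Finv * (u ⊗ₜ[k] (1 : H)))) := by
      simp only [mul_assoc]
    rw [e, mulIdS, mulIdS, mulIdS]
    have h0 : μ (TensorProduct.map LinearMap.id 𝒮 ((u : H) ⊗ₜ[k] (1 : H))) = u := by
      simp [LinearMap.mul'_apply, antipode_one']
    rw [h0, L2, sandR_one, anti_l, Algebra.algebraMap_eq_smul_one, LinearMap.map_smul,
      sandR_one, ← hu]
    rw [smul_mul_assoc, huv]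

end Main


/-- Drinfeld's twisting of the antipode: Let `F` be an invertible twist of a
Hopf algebra `H` (cocycle + counit conditions) with inverse `F⁻¹`, and let
`u = Σ f⁽¹⁾ S(f⁽²⁾)` (i.e. `u = m((id ⊗ S)(F))`).  Then `u` is invertible, with inverse
`v = m((S ⊗ id)(F⁻¹)) = Σ S(g⁽¹⁾) g⁽²⁾`, and `S^{(F)}(a) = u S(a) u⁻¹` is an antipode for
the twisted coproduct `Δ^{(F)}(a) = F Δ(a) F⁻¹`. -/
theorem twisted_antipode {k : Type*} [Field k] {H : Type*} [Ring H] [HopfAlgebra k H]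
    (F Finv : H ⊗[k] H) (hinv : F * Finv = 1 ∧ Finv * F = 1) :
    let e12 : H ⊗[k] H →ₗ[k] H ⊗[k] (H ⊗[k] H) :=
      TensorProduct.map LinearMap.id ((TensorProduct.mk k H H).flip 1)
    let e23 : H ⊗[k] H →ₗ[k] H ⊗[k] (H ⊗[k] H) := TensorProduct.mk k H (H ⊗[k] H) 1
    let Δ₀ : H →ₗ[k] H ⊗[k] H := Coalgebra.comul
    let ε : H →ₗ[k] k := Coalgebra.counit
    let S : H →ₗ[k] H := HopfAlgebra.antipode k
    let E1 : H ⊗[k] H →ₗ[k] H :=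
      (TensorProduct.lid k H).toLinearMap ∘ₗ TensorProduct.map ε LinearMap.id
    let E2 : H ⊗[k] H →ₗ[k] H :=
      (TensorProduct.rid k H).toLinearMap ∘ₗ TensorProduct.map LinearMap.id ε
    -- u = Σ f⁽¹⁾ S(f⁽²⁾) and its claimed inverse v = Σ S(g⁽¹⁾) g⁽²⁾
    let u : H := LinearMap.mul' k H (TensorProduct.map LinearMap.id S F)
    let v : H := LinearMap.mul' k H (TensorProduct.map S LinearMap.id Finv)
    -- twisted coproduct and antipode
    let ΔF : H →ₗ[k] H ⊗[k] H :=
      LinearMap.mulRight k Finv ∘ₗ LinearMap.mulLeft k F ∘ₗ Δ₀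
    let SF : H →ₗ[k] H := LinearMap.mulRight k v ∘ₗ LinearMap.mulLeft k u ∘ₗ S
    -- cocycle equation for F
    e12 F * ((TensorProduct.assoc k H H H).toLinearMap
        (TensorProduct.map Δ₀ LinearMap.id F)) =
      e23 F * TensorProduct.map LinearMap.id Δ₀ F →
    -- counit normalization for F
    (E1 F = 1 ∧ E2 F = 1) →
    -- conclusions: u is invertible (with inverse v), and S^{(F)} is an antipode for Δ^{(F)}
    (u * v = 1 ∧ v * u = 1) ∧
      (∀ a : H,
        LinearMap.mul' k H (TensorProduct.map SF LinearMap.id (ΔF a)) =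
          algebraMap k H (ε a) ∧
        LinearMap.mul' k H (TensorProduct.map LinearMap.id SF (ΔF a)) =
          algebraMap k H (ε a)) := by
  intro e12 e23 Δ₀ ε S E1 E2 u v ΔF SF hcoc hcu
  exact twisted_antipode_main F Finv hinv hcoc hcu
end
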